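/- arXiv:math/0608593 — 5 statements merged into one kernel-verified Lean document; each statement's English description precedes it below -/
import Mathlib

section
/- For every q ∈ ℂ with q ∉ {0,1}: the Weierstrass equation defining E₁(q) has nonzero discriminant (so E₁(q) is an elliptic curve over ℂ(T)), the point P = (0,0) lies on E₁(q), and P has infinite order in the group E₁(q)(ℂ(T)), i.e. k•P ≠ O for every positive integer k. -/
open Polynomial WeierstrassCurve

/-- The dehomogenized curve `E₁(q)` of Elkies' paper, over `ℂ(T)`:
`Y² + (1 − (q+1)T)XY + qT(T−1)Y = X³ − qTX²`. -/
noncomputable def E₁ (q : ℂ) : WeierstrassCurve.Affine (RatFunc ℂ) where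
  a₁ := algebraMap (Polynomial ℂ) (RatFunc ℂ) (1 - C (q + 1) * X)
  a₂ := algebraMap (Polynomial ℂ) (RatFunc ℂ) (-(C q * X))
  a₃ := algebraMap (Polynomial ℂ) (RatFunc ℂ) (C q * X * (X - 1))
  a₄ := 0
  a₆ := 0



noncomputable section LeadAPI

abbrev LS := LaurentSeries ℂ

def OS : PowerSeries ℂ →+* LS := HahnSeries.ofPowerSeries ℤ ℂ

def XL : LS := OS PowerSeries.X

lemma OSX : OS PowerSeries.X = XL := rfl

lemma OS_injective : Function.Injective OS := HahnSeries.ofPowerSeries_injective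

lemma XL_ne_zero : XL ≠ 0 := by
  intro h
  exact PowerSeries.X_ne_zero (OS_injective (by simpa [OSX] using h))

lemma XL_zpow_ne_zero (k : ℤ) : XL ^ k ≠ 0 := zpow_ne_zero k XL_ne_zero

/-- `f` has `X`-adic valuation at least `k`. -/
def Ordge (k : ℤ) (f : LS) : Prop := ∃ g : PowerSeries ℂ, f = XL ^ k * OS g

/-- `f = c·X^k + higher order terms`. -/
def Lead (k : ℤ) (c : ℂ) (f : LS) : Prop :=
  ∃ g : PowerSeries ℂ, f = XL ^ k * OS (PowerSeries.C c + PowerSeries.X * g)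

lemma Lead.ordge {k c f} (h : Lead k c f) : Ordge k f := ⟨_, h.choose_spec⟩

lemma ordge_OS (g : PowerSeries ℂ) : Ordge 0 (OS g) := ⟨g, by simp⟩

lemma Ordge.add {k f f'} (h : Ordge k f) (h' : Ordge k f') : Ordge k (f + f') := by
  obtain ⟨g, rfl⟩ := h; obtain ⟨g', rfl⟩ := h'
  exact ⟨g + g', by simp only [map_add]; ring⟩

lemma Ordge.neg {k f} (h : Ordge k f) : Ordge k (-f) := by
  obtain ⟨g, rfl⟩ := h; exact ⟨-g, by simp only [map_neg]; ring⟩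

lemma Ordge.mul {k k' f f'} (h : Ordge k f) (h' : Ordge k' f') : Ordge (k + k') (f * f') := by
  obtain ⟨g, rfl⟩ := h; obtain ⟨g', rfl⟩ := h'
  exact ⟨g * g', by simp only [map_mul, zpow_add₀ XL_ne_zero]; ring⟩

lemma XL_zpow_natCast (n : ℕ) : XL ^ (n : ℤ) = OS (PowerSeries.X ^ n) := by
  rw [zpow_natCast, map_pow, OSX]

lemma Ordge.mono {k j : ℤ} {f} (hjk : j ≤ k) (h : Ordge k f) : Ordge j f := by
  obtain ⟨g, rfl⟩ := h
  refine ⟨PowerSeries.X ^ (k - j).toNat * g, ?_⟩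
  rw [map_mul, ← XL_zpow_natCast, Int.toNat_of_nonneg (by omega), ← mul_assoc,
    ← zpow_add₀ XL_ne_zero]
  have : j + (k - j) = k := by ring
  rw [this]

lemma ordge_zero (k : ℤ) : Ordge k (0 : LS) := ⟨0, by simp⟩

lemma Ordge.X_mul_shift {k f} (h : Ordge (k + 1) f) :
    ∃ g : PowerSeries ℂ, f = XL ^ k * OS (PowerSeries.X * g) := by
  obtain ⟨g, rfl⟩ := h
  exact ⟨g, by rw [map_mul, OSX, zpow_add₀ XL_ne_zero, zpow_one]; ring⟩

lemma Lead.add_ordge {k c f f'} (h : Lead k c f) (h' : Ordge (k + 1) f') :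
    Lead k c (f + f') := by
  obtain ⟨g, rfl⟩ := h; obtain ⟨g', rfl⟩ := h'.X_mul_shift
  exact ⟨g + g', by simp only [map_add, map_mul]; ring⟩

lemma Lead.add {k c c' f f'} (h : Lead k c f) (h' : Lead k c' f') :
    Lead k (c + c') (f + f') := by
  obtain ⟨g, rfl⟩ := h; obtain ⟨g', rfl⟩ := h'
  exact ⟨g + g', by simp only [map_add, map_mul]; ring⟩

lemma Lead.neg {k c f} (h : Lead k c f) : Lead k (-c) (-f) := by
  obtain ⟨g, rfl⟩ := h
  exact ⟨-g, by simp only [map_add, map_mul, map_neg]; ring⟩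

lemma Lead.sub {k c c' f f'} (h : Lead k c f) (h' : Lead k c' f') :
    Lead k (c - c') (f - f') := by
  simpa [sub_eq_add_neg] using h.add h'.neg

lemma Lead.mul {k k' c c' f f'} (h : Lead k c f) (h' : Lead k' c' f') :
    Lead (k + k') (c * c') (f * f') := by
  obtain ⟨g, rfl⟩ := h; obtain ⟨g', rfl⟩ := h'
  refine ⟨PowerSeries.C c * g' + PowerSeries.C c' * g + PowerSeries.X * g * g', ?_⟩
  simp only [map_add, map_mul, zpow_add₀ XL_ne_zero]
  ring

lemma Lead.congr {k c c' f} (h : Lead k c f) (hc : c = c') : Lead k c' f := hc ▸ h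

lemma Lead.index_congr {k k' c f} (h : Lead k c f) (hk : k = k') : Lead k' c f := hk ▸ h

lemma lead_ne_zero {k c f} (h : Lead k c f) (hc : c ≠ 0) : f ≠ 0 := by
  obtain ⟨g, rfl⟩ := h
  intro h0
  rcases mul_eq_zero.mp h0 with h1 | h1
  · exact XL_zpow_ne_zero k h1
  · apply hc
    have : PowerSeries.C c + PowerSeries.X * g = 0 := OS_injective (by simpa using h1)
    have := congrArg (PowerSeries.constantCoeff) this
    simpa using this

lemma ne_of_lead_sub {k c f f'} (h : Lead k c (f - f')) (hc : c ≠ 0) : f ≠ f' :=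
  fun hf => lead_ne_zero h hc (by simp [hf])

lemma Lead.zero_of_ordge {k c f} (h : Lead k c f) (h' : Ordge (k + 1) f) : c = 0 := by
  obtain ⟨g, hg⟩ := h
  obtain ⟨g', hg'⟩ := h'.X_mul_shift
  rw [hg] at hg'
  have h2 : OS (PowerSeries.C c + PowerSeries.X * g) = OS (PowerSeries.X * g') :=
    mul_left_cancel₀ (XL_zpow_ne_zero k) hg'
  have := congrArg (PowerSeries.constantCoeff) (OS_injective h2)
  simpa using this

lemma Lead.inv {k c f} (h : Lead k c f) (hc : c ≠ 0) : Lead (-k) c⁻¹ f⁻¹ := by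
  obtain ⟨g, rfl⟩ := h
  set u : PowerSeries ℂ := PowerSeries.C c + PowerSeries.X * g with hu
  have hcu : PowerSeries.constantCoeff u = c := by simp [hu]
  have hunit : IsUnit u := PowerSeries.isUnit_iff_constantCoeff.mpr (hcu ▸ hc.isUnit)
  obtain ⟨v, hv⟩ := hunit.exists_right_inv
  have hcv : PowerSeries.constantCoeff v = c⁻¹ := by
    have h1 := congrArg (PowerSeries.constantCoeff) hv
    simp only [map_mul, map_one, hcu] at h1
    field_simp
    linear_combination h1
  obtain ⟨w, hw⟩ : (PowerSeries.X : PowerSeries ℂ) ∣ v - PowerSeries.C c⁻¹ :=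
    PowerSeries.X_dvd_iff.mpr (by simp [hcv])
  have hvw : v = PowerSeries.C c⁻¹ + PowerSeries.X * w := by linear_combination hw
  have hone : (XL ^ k * OS u) * (XL ^ (-k) * OS v) = 1 := by
    have : XL ^ k * OS u * (XL ^ (-k) * OS v) = (XL ^ k * XL ^ (-k)) * OS (u * v) := by
      simp only [map_mul]; ring
    rw [this, ← zpow_add₀ XL_ne_zero, hv]
    simp
  exact ⟨w, by rw [inv_eq_of_mul_eq_one_right hone, hvw]⟩

lemma Lead.div {k k' c c' f f'} (h : Lead k c f) (h' : Lead k' c' f') (hc' : c' ≠ 0) :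
    Lead (k - k') (c / c') (f / f') := by
  have h2 := h.mul (h'.inv hc')
  rw [div_eq_mul_inv, div_eq_mul_inv]
  exact (h2.index_congr (by ring)).congr rfl

def CL (c : ℂ) : LS := OS (PowerSeries.C c)

lemma lead_C (c : ℂ) : Lead 0 c (CL c) :=
  ⟨0, by simp only [mul_zero, add_zero, zpow_zero, one_mul, CL]⟩

lemma ordge_C (c : ℂ) : Ordge 0 (CL c) := (lead_C c).ordge

lemma lead_zero_f (k : ℤ) : Lead k 0 (0 : LS) := ⟨0, by simp⟩

end LeadAPI
noncomputable section PhiSection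

variable (t : ℂ)

def sigmaT : Polynomial ℂ →+* Polynomial ℂ := (aeval (X + C t) : Polynomial ℂ →ₐ[ℂ] Polynomial ℂ).toRingHom

lemma sigmaT_apply (p : Polynomial ℂ) : sigmaT t p = p.comp (X + C t) := rfl

lemma sigmaT_injective : Function.Injective (sigmaT t) := by
  intro p p' h
  simp only [sigmaT_apply] at h
  have h2 := congrArg (fun r : Polynomial ℂ => r.comp (X - C t)) h
  simp only [comp_assoc] at h2
  have h3 : (X + C t).comp (X - C t) = (X : Polynomial ℂ) := by
    simp [add_comp, X_comp, C_comp]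
  rwa [h3, comp_X, comp_X] at h2

def glift : Polynomial ℂ →+* LS :=
  OS.comp ((Polynomial.coeToPowerSeries.ringHom).comp (sigmaT t))

lemma glift_apply (p : Polynomial ℂ) : glift t p = OS (↑(sigmaT t p) : PowerSeries ℂ) := rfl

lemma glift_injective : Function.Injective (glift t) :=
  OS_injective.comp ((Polynomial.coe_injective ℂ).comp (sigmaT_injective t))

def phi : RatFunc ℂ →+* LS := IsFractionRing.lift (glift_injective t)

lemma phi_A (p : Polynomial ℂ) :
    phi t (algebraMap (Polynomial ℂ) (RatFunc ℂ) p) = OS (↑(sigmaT t p) : PowerSeries ℂ) :=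
  IsFractionRing.lift_algebraMap _ _

lemma lead_phi (p : Polynomial ℂ) :
    Lead 0 (p.eval t) (phi t (algebraMap (Polynomial ℂ) (RatFunc ℂ) p)) := by
  obtain ⟨r, hr⟩ : (X : Polynomial ℂ) ∣ (sigmaT t p - C (p.eval t)) := by
    rw [Polynomial.X_dvd_iff]
    simp [coeff_zero_eq_eval_zero, sigmaT_apply, eval_comp]
  have hs : sigmaT t p = C (p.eval t) + X * r := by linear_combination hr
  rw [phi_A, hs]
  refine ⟨(r : PowerSeries ℂ), ?_⟩
  push_cast
  rw [zpow_zero, one_mul]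

end PhiSection
noncomputable section PtMap

open WeierstrassCurve.Affine WeierstrassCurve.Affine.Point

variable {F : Type} [Field F] [DecidableEq F] {K : Type} [Field K] [DecidableEq K] (W : WeierstrassCurve.Affine F) (f : F →+* K)

def ptMapFun : W.Point → (W.map f).toAffine.Point
  | 0 => 0
  | Point.some _ _ h => Point.some _ _ ((W.map_nonsingular f.injective _ _).mpr h)

def ptMap : W.Point →+ (W.map f).toAffine.Point where
  toFun := ptMapFun W f
  map_zero' := rfl
  map_add' := by
    rintro (_ | @⟨x₁, y₁, h₁⟩) (_ | @⟨x₂, y₂, h₂⟩)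
    any_goals rfl
    have inj : Function.Injective f := f.injective
    by_cases h : x₁ = x₂ ∧ y₁ = W.negY x₂ y₂
    · simp only [add_of_Y_eq h.1 h.2, ptMapFun]
      rw [add_of_Y_eq congr(f $(h.1))]
      rw [W.map_negY, inj.eq_iff]
      exact h.2
    · simp only [add_some h, ptMapFun]
      rw [add_some]
      · simp only [Point.some.injEq, W.map_addX, W.map_addY, map_slope]
      · push_neg at h ⊢
        intro hx
        rw [W.map_negY, inj.ne_iff]
        exact h (inj hx)

lemma ptMap_some {x y : F} (h : W.Nonsingular x y) :
    ptMap W f (Point.some _ _ h) = Point.some _ _ ((W.map_nonsingular f.injective x y).mpr h) := rfl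

end PtMap
noncomputable section KeySection

open WeierstrassCurve.Affine WeierstrassCurve.Affine.Point

lemma Lead.of_eq {k c} {f f' : LS} (h : Lead k c f) (hf : f = f') : Lead k c f' := hf ▸ h

lemma Ordge.of_eq {k} {f f' : LS} (h : Ordge k f) (hf : f = f') : Ordge k f' := hf ▸ h

lemma Ordge.sub {k} {f f' : LS} (h : Ordge k f) (h' : Ordge k f') : Ordge k (f - f') := by
  simpa [sub_eq_add_neg] using h.add h'.neg

lemma Ordge.index_congr {k k' : ℤ} {f : LS} (h : Ordge k f) (hk : k = k') : Ordge k' f := hk ▸ h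

lemma Ordge.mulLe {k k' k'' : ℤ} {f f' : LS} (h : Ordge k f) (h' : Ordge k' f')
    (hk : k'' ≤ k + k') : Ordge k'' (f * f') := (h.mul h').mono hk

lemma lead_two : Lead 0 2 (2 : LS) := by
  have h := lead_C 2
  rwa [show CL 2 = (2 : LS) by simp [CL, map_ofNat]] at h

lemma lead_three : Lead 0 3 (3 : LS) := by
  have h := lead_C 3
  rwa [show CL 3 = (3 : LS) by simp [CL, map_ofNat]] at h

variable [DecidableEq LS] {W : WeierstrassCurve.Affine LS}

lemma lead_y_sub_negY (hA1 : Ordge 0 W.a₁) (hA3 : Ordge 0 W.a₃)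
    {x y : LS} {cy : ℂ} (hx : Ordge (-2) x) (hy : Lead (-3) cy y) :
    Lead (-3) (2 * cy) (y - W.negY x y) := by
  have hexp : (y + y) + (W.a₁ * x + W.a₃) = y - W.negY x y := by
    simp only [WeierstrassCurve.Affine.negY]; ring
  have j1 : Ordge (-2) (W.a₁ * x) := (hA1.mul hx).index_congr (by norm_num)
  have j2 : Ordge (-2) W.a₃ := hA3.mono (by norm_num)
  have j : Ordge (-3 + 1) (W.a₁ * x + W.a₃) := (j1.add j2).index_congr (by norm_num)
  exact (((hy.add hy).add_ordge j).congr (by ring)).of_eq hexp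

/-- Doubling step: the double of a point with leads `(γ², γ³)` has leads `(γ²/4, γ³/8)`. -/
lemma key_double (hA1 : Ordge 0 W.a₁) (hA2 : Ordge 0 W.a₂) (hA3 : Ordge 0 W.a₃)
    (hA4 : Ordge 0 W.a₄) {x y : LS} (h : W.Nonsingular x y) {γ : ℂ} (hγ : γ ≠ 0)
    (hx : Lead (-2) (γ^2) x) (hy : Lead (-3) (γ^3) y) :
    ∃ (x' y' : LS) (h' : W.Nonsingular x' y'),
      (2 : ℕ) • (Point.some _ _ h) = Point.some _ _ h' ∧
      Lead (-2) (γ^2/4) x' ∧ Lead (-3) (γ^3/8) y' := by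
  have hyd : Lead (-3) (2 * γ^3) (y - W.negY x y) := lead_y_sub_negY hA1 hA3 hx.ordge hy
  have h2γ : (2 : ℂ) * γ^3 ≠ 0 := by
    simp [hγ]
  have hyne : y ≠ W.negY x y := ne_of_lead_sub hyd h2γ
  -- the slope
  set lam := W.slope x x y y with hlam_def
  have hslope_eq : lam = (3*x^2 + 2*W.a₂*x + W.a₄ - W.a₁*y) / (y - W.negY x y) :=
    slope_of_Y_ne rfl hyne
  have hnum : Lead (-4) (3*(γ^2*γ^2)) (3*x^2 + 2*W.a₂*x + W.a₄ - W.a₁*y) := by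
    have h1 : Lead (-4) (3*(γ^2*γ^2)) ((3:LS)*(x*x)) :=
      (lead_three.mul (hx.mul hx)).index_congr (by norm_num)
    have h2 : Ordge (-3) (2*W.a₂*x + W.a₄ - W.a₁*y) := by
      refine (((lead_two.ordge.mulLe hA2 (le_refl _)).mulLe hx.ordge (by norm_num)).add
        (hA4.mono (by norm_num))).add ((hA1.mulLe hy.ordge (le_refl _)).neg.index_congr
          (by norm_num)) |>.index_congr rfl
    exact ((h1.add_ordge (h2.index_congr (by norm_num))).of_eq (by ring))
  have hlam : Lead (-1) (3*(γ^2*γ^2)/(2*γ^3)) lam := by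
    rw [hslope_eq]
    exact (hnum.div hyd h2γ).index_congr (by norm_num)
  set m : ℂ := 3*(γ^2*γ^2)/(2*γ^3) with hm_def
  -- x-coordinate
  have haddX : Lead (-2) (γ^2/4) (W.addX x x lam) := by
    have h1 : Lead (-2) (m*m + -(γ^2) + -(γ^2)) (lam*lam + -x + -x) :=
      ((hlam.mul hlam).index_congr (by norm_num)).add hx.neg |>.add hx.neg
    have h2 : Ordge (-1) (W.a₁ * lam + -W.a₂) :=
      (hA1.mulLe hlam.ordge (by norm_num)).add (hA2.neg.mono (by norm_num))
    refine (((h1.add_ordge (h2.index_congr (by norm_num))).congr ?_).of_eq ?_)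
    · rw [hm_def]; field_simp; ring
    · rw [WeierstrassCurve.Affine.addX]; ring
  -- y-coordinate
  have haddY : Lead (-3) (γ^3/8) (W.addY x x y lam) := by
    have h1 : Lead (-3) (-(m*(γ^2/4 + -(γ^2)) + γ^3)) (-(lam*(W.addX x x lam + -x) + y)) :=
      ((hlam.mul (haddX.add hx.neg)).index_congr (by norm_num)).add hy |>.neg
    have h2 : Ordge (-2) (-(W.a₁ * W.addX x x lam) + -W.a₃) :=
      ((hA1.mulLe haddX.ordge (by norm_num)).neg).add (hA3.neg.mono (by norm_num))
    refine ((h1.add_ordge (h2.index_congr (by norm_num))).congr ?_).of_eq ?_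
    · rw [hm_def]; field_simp; ring
    · rw [WeierstrassCurve.Affine.addY, WeierstrassCurve.Affine.negAddY,
        WeierstrassCurve.Affine.negY]; ring
  exact ⟨_, _, nonsingular_add h h (fun hc => hyne hc.2),
    by rw [two_nsmul, add_self_of_Y_ne hyne], haddX, haddY⟩

/-- Generic addition step. -/
lemma key_step (hA1 : Ordge 0 W.a₁) (hA2 : Ordge 0 W.a₂) (hA3 : Ordge 0 W.a₃)
    {x y : LS} (h : W.Nonsingular x y) {γ ν : ℂ} (hγ : γ ≠ 0) (hν : ν ≠ 0)
    (hν1 : ν + 1 ≠ 0) (hν2 : ν^2 - 1 ≠ 0)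
    (hx : Lead (-2) (γ^2) x) (hy : Lead (-3) (γ^3) y)
    {x' y' : LS} (h' : W.Nonsingular x' y')
    (hx' : Lead (-2) (γ^2/ν^2) x') (hy' : Lead (-3) (γ^3/ν^3) y') :
    ∃ (x'' y'' : LS) (h'' : W.Nonsingular x'' y''),
      (Point.some _ _ h' + Point.some _ _ h = Point.some _ _ h'') ∧
      Lead (-2) (γ^2/(ν+1)^2) x'' ∧ Lead (-3) (γ^3/(ν+1)^3) y'' := by
  have hdx : Lead (-2) (γ^2/ν^2 - γ^2) (x' - x) := hx'.sub hx
  have hdxc : γ^2/ν^2 - γ^2 ≠ 0 := by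
    have : γ^2/ν^2 - γ^2 = γ^2 * (1 - ν^2)/ν^2 := by field_simp
    rw [this]
    apply div_ne_zero _ (pow_ne_zero 2 hν)
    exact mul_ne_zero (pow_ne_zero 2 hγ) (by intro hc; apply hν2; linear_combination -hc)
  have hxx : x' ≠ x := ne_of_lead_sub hdx hdxc
  set lam := W.slope x' x y' y with hlam_def
  have hslope_eq : lam = (y' - y) / (x' - x) := slope_of_X_ne hxx
  have hlam : Lead (-1) ((γ^3/ν^3 - γ^3)/(γ^2/ν^2 - γ^2)) lam := by
    rw [hslope_eq]
    exact ((hy'.sub hy).div hdx hdxc).index_congr (by norm_num)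
  set m : ℂ := (γ^3/ν^3 - γ^3)/(γ^2/ν^2 - γ^2) with hm_def
  have h1ν : (ν*(ν+1)) ≠ 0 := mul_ne_zero hν hν1
  have h2ν : (ν+1)^2 ≠ 0 := pow_ne_zero _ hν1
  have h3ν : ν^2 ≠ 0 := pow_ne_zero _ hν
  have h4ν : ν^3 ≠ 0 := pow_ne_zero _ hν
  have h5ν : (ν+1)^3 ≠ 0 := pow_ne_zero _ hν1
  have hm : m = γ*(ν^2+ν+1)/(ν*(ν+1)) := by
    rw [hm_def]
    rw [div_eq_div_iff hdxc (by exact mul_ne_zero hν hν1)]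
    field_simp
    ring
  have haddX : Lead (-2) (γ^2/(ν+1)^2) (W.addX x' x lam) := by
    have h1 : Lead (-2) (m*m + -(γ^2/ν^2) + -(γ^2)) (lam*lam + -x' + -x) :=
      ((hlam.mul hlam).index_congr (by norm_num)).add hx'.neg |>.add hx.neg
    have h2 : Ordge (-1) (W.a₁ * lam + -W.a₂) :=
      (hA1.mulLe hlam.ordge (by norm_num)).add (hA2.neg.mono (by norm_num))
    refine ((h1.add_ordge (h2.index_congr (by norm_num))).congr ?_).of_eq ?_
    · rw [hm]; field_simp; ring
    · rw [WeierstrassCurve.Affine.addX]; ring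
  have haddY : Lead (-3) (γ^3/(ν+1)^3) (W.addY x' x y' lam) := by
    have h1 : Lead (-3) (-(m*(γ^2/(ν+1)^2 + -(γ^2/ν^2)) + γ^3/ν^3))
        (-(lam*(W.addX x' x lam + -x') + y')) :=
      ((hlam.mul (haddX.add hx'.neg)).index_congr (by norm_num)).add hy' |>.neg
    have h2 : Ordge (-2) (-(W.a₁ * W.addX x' x lam) + -W.a₃) :=
      ((hA1.mulLe haddX.ordge (by norm_num)).neg).add (hA3.neg.mono (by norm_num))
    refine ((h1.add_ordge (h2.index_congr (by norm_num))).congr ?_).of_eq ?_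
    · rw [hm]; field_simp; ring
    · rw [WeierstrassCurve.Affine.addY, WeierstrassCurve.Affine.negAddY,
        WeierstrassCurve.Affine.negY]; ring
  exact ⟨_, _, nonsingular_add h' h (fun hc => hxx hc.1),
    add_of_X_ne hxx, haddX, haddY⟩

/-- The main induction: all positive multiples of a point in the kernel of reduction
with exact valuations are nonzero, with explicit leading coefficients. -/
lemma key (hA1 : Ordge 0 W.a₁) (hA2 : Ordge 0 W.a₂) (hA3 : Ordge 0 W.a₃)
    (hA4 : Ordge 0 W.a₄) {x y : LS} (h : W.Nonsingular x y) {γ : ℂ} (hγ : γ ≠ 0)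
    (hx : Lead (-2) (γ^2) x) (hy : Lead (-3) (γ^3) y) :
    ∀ n : ℕ, 1 ≤ n → ∃ (x' y' : LS) (h' : W.Nonsingular x' y'),
      (n • (Point.some _ _ h) = Point.some _ _ h') ∧
      Lead (-2) (γ^2/(n:ℂ)^2) x' ∧ Lead (-3) (γ^3/(n:ℂ)^3) y' := by
  have main : ∀ n : ℕ, 2 ≤ n → ∃ (x' y' : LS) (h' : W.Nonsingular x' y'),
      (n • (Point.some _ _ h) = Point.some _ _ h') ∧
      Lead (-2) (γ^2/(n:ℂ)^2) x' ∧ Lead (-3) (γ^3/(n:ℂ)^3) y' := by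
    intro n hn
    induction n, hn using Nat.le_induction with
    | base =>
      obtain ⟨x', y', h', he, hX, hY⟩ := key_double hA1 hA2 hA3 hA4 h hγ hx hy
      exact ⟨x', y', h', he, hX.congr (by norm_num), hY.congr (by norm_num)⟩
    | succ n hn ih =>
      obtain ⟨x', y', h', he, hX, hY⟩ := ih
      have hν : (n : ℂ) ≠ 0 := Nat.cast_ne_zero.mpr (by omega)
      have hν1 : (n : ℂ) + 1 ≠ 0 := by
        have : ((n + 1 : ℕ) : ℂ) ≠ 0 := Nat.cast_ne_zero.mpr (by omega)
        push_cast at this; exact this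
      have hν2 : (n : ℂ)^2 - 1 ≠ 0 := by
        intro hc
        have h1 : ((n^2 : ℕ) : ℂ) = ((1 : ℕ) : ℂ) := by push_cast; linear_combination hc
        have h2 : n^2 = 1 := by exact_mod_cast h1
        nlinarith
      obtain ⟨x'', y'', h'', he2, hX2, hY2⟩ :=
        key_step hA1 hA2 hA3 h hγ hν hν1 hν2 hx hy h' hX hY
      refine ⟨x'', y'', h'', ?_, hX2.congr (by push_cast; ring), hY2.congr (by push_cast; ring)⟩
      rw [succ_nsmul, he, he2]
  intro n hn
  rcases eq_or_lt_of_le hn with h1 | h1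
  · subst h1
    exact ⟨x, y, h, by rw [one_nsmul], hx.congr (by norm_num), hy.congr (by norm_num)⟩
  · exact main n h1

end KeySection
noncomputable section CurveK

open WeierstrassCurve.Affine WeierstrassCurve.Affine.Point

lemma add_eq {F : Type} [Field F] [DecidableEq F] {W : WeierstrassCurve.Affine F} {x₁ y₁ x₂ y₂ x₃ y₃ : F}
    (h₁ : W.Nonsingular x₁ y₁) (h₂ : W.Nonsingular x₂ y₂)
    (hxy : x₁ = x₂ → y₁ ≠ W.negY x₂ y₂)
    (hX : W.addX x₁ x₂ (W.slope x₁ x₂ y₁ y₂) = x₃)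
    (hY : W.addY x₁ x₂ y₁ (W.slope x₁ x₂ y₁ y₂) = y₃) :
    ∃ h₃ : W.Nonsingular x₃ y₃, Point.some _ _ h₁ + Point.some _ _ h₂ = Point.some _ _ h₃ := by
  subst hX; subst hY
  exact ⟨_, add_some (fun hc => hxy hc.1 hc.2)⟩

variable (q : ℂ)

-- abbreviations over K = ℂ(T)
local notation "K" => RatFunc ℂ
local notation "A" => algebraMap (Polynomial ℂ) (RatFunc ℂ)

lemma ea1 : (E₁ q).a₁ = 1 - (RatFunc.C q + 1) * RatFunc.X := by
  show A (1 - C (q + 1) * X) = _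
  simp only [map_sub, map_mul, map_add, map_one, RatFunc.algebraMap_C, RatFunc.algebraMap_X]

lemma ea2 : (E₁ q).a₂ = -(RatFunc.C q * RatFunc.X) := by
  show A (-(C q * X)) = _
  simp only [map_neg, map_mul, RatFunc.algebraMap_C, RatFunc.algebraMap_X]

lemma ea3 : (E₁ q).a₃ = RatFunc.C q * RatFunc.X * (RatFunc.X - 1) := by
  show A (C q * X * (X - 1)) = _
  simp only [map_sub, map_mul, map_one, RatFunc.algebraMap_C, RatFunc.algebraMap_X]

lemma ea4 : (E₁ q).a₄ = 0 := rfl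
lemma ea6 : (E₁ q).a₆ = 0 := rfl

end CurveK
set_option maxHeartbeats 3200000 in
open Classical in
open WeierstrassCurve.Affine WeierstrassCurve.Affine.Point in
theorem stmt_0 (q : ℂ) (hq0 : q ≠ 0) (hq1 : q ≠ 1) :
    (E₁ q).Δ ≠ 0 ∧ (E₁ q).Equation 0 0 ∧
      ∃ h : (E₁ q).Nonsingular 0 0,
        ∀ k : ℕ, 0 < k →
          k • (WeierstrassCurve.Affine.Point.some 0 0 h) ≠ (0 : (E₁ q).Point) := by
  classical
  set κ : RatFunc ℂ := RatFunc.C q with hκdef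
  set τ : RatFunc ℂ := RatFunc.X with hτdef
  have hA1 : (E₁ q).a₁ = 1 - (κ + 1) * τ := ea1 q
  have hA2 : (E₁ q).a₂ = -(κ * τ) := ea2 q
  have hA3 : (E₁ q).a₃ = κ * τ * (τ - 1) := ea3 q
  have hA4 : (E₁ q).a₄ = 0 := rfl
  have hA6 : (E₁ q).a₆ = 0 := rfl
  have hAinj : Function.Injective (algebraMap (Polynomial ℂ) (RatFunc ℂ)) :=
    IsFractionRing.injective (Polynomial ℂ) (RatFunc ℂ)
  have hAne : ∀ (p : Polynomial ℂ) (z : ℂ), p.eval z ≠ 0 →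
      algebraMap (Polynomial ℂ) (RatFunc ℂ) p ≠ 0 := by
    intro p z hz h
    apply hz
    have hp0 : p = 0 := hAinj (by rw [h, _root_.map_zero])
    rw [hp0]
    simp
  have hκ0 : κ ≠ 0 := fun h =>
    hq0 ((RingHom.injective (RatFunc.C : ℂ →+* RatFunc ℂ)) (by rw [hκdef] at h; rw [h, _root_.map_zero]))
  have hq1' : q - 1 ≠ 0 := sub_ne_zero.mpr hq1
  have hκ1 : κ - 1 ≠ 0 := fun h => hq1' ((RingHom.injective (RatFunc.C : ℂ →+* RatFunc ℂ))
    (by rw [map_sub, map_one, _root_.map_zero]; rw [hκdef] at h; exact h))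
  have hτ0 : τ ≠ 0 := by
    rw [hτdef, ← RatFunc.algebraMap_X]
    exact hAne _ 1 (by simp)
  have hτ1 : τ - 1 ≠ 0 := by
    rw [hτdef, ← RatFunc.algebraMap_X, show (1 : RatFunc ℂ) =
      algebraMap (Polynomial ℂ) (RatFunc ℂ) 1 from (map_one _).symm, ← map_sub]
    exact hAne _ 0 (by simp)
  -- the discriminant
  have hΔeq : (E₁ q).Δ = τ^5 * (κ^4 * ((1 - κ) + (16*κ - 4 - 11*κ^2)*τ
      + (6 - 26*κ + 25*κ^2 + κ^3)*τ^2 + (8*κ - 4 - 17*κ^2 - 2*κ^3)*τ^3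
      + (1 + 3*κ + 3*κ^2 + κ^3)*τ^4)) := by
    simp only [WeierstrassCurve.Δ, WeierstrassCurve.b₂, WeierstrassCurve.b₄, WeierstrassCurve.b₆,
      WeierstrassCurve.b₈, hA1, hA2, hA3, hA4, hA6]
    ring
  have hEk : ((1 - κ) + (16*κ - 4 - 11*κ^2)*τ + (6 - 26*κ + 25*κ^2 + κ^3)*τ^2
      + (8*κ - 4 - 17*κ^2 - 2*κ^3)*τ^3 + (1 + 3*κ + 3*κ^2 + κ^3)*τ^4) ≠ 0 := by
    have heq : ((1 - κ) + (16*κ - 4 - 11*κ^2)*τ + (6 - 26*κ + 25*κ^2 + κ^3)*τ^2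
        + (8*κ - 4 - 17*κ^2 - 2*κ^3)*τ^3 + (1 + 3*κ + 3*κ^2 + κ^3)*τ^4)
        = algebraMap (Polynomial ℂ) (RatFunc ℂ) ((1 - C q) + (16*C q - 4 - 11*C q^2)*X
        + (6 - 26*C q + 25*C q^2 + C q^3)*X^2 + (8*C q - 4 - 17*C q^2 - 2*C q^3)*X^3
        + (1 + 3*C q + 3*C q^2 + C q^3)*X^4) := by
      simp only [map_add, map_sub, map_mul, map_one, map_pow, map_ofNat,
        RatFunc.algebraMap_C, RatFunc.algebraMap_X, hκdef, hτdef]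
    rw [heq]
    refine hAne _ 0 ?_
    simp only [eval_add, eval_sub, eval_mul, eval_pow, eval_one, eval_ofNat, eval_C, eval_X]
    intro h
    exact hq1' (by linear_combination -h)
  have hΔ : (E₁ q).Δ ≠ 0 := by
    rw [hΔeq]
    exact mul_ne_zero (pow_ne_zero _ hτ0) (mul_ne_zero (pow_ne_zero _ hκ0) hEk)
  -- the base point
  have hEq00 : (E₁ q).Equation 0 0 := by
    rw [WeierstrassCurve.Affine.equation_iff]
    simp [hA6]
  have hP : (E₁ q).Nonsingular 0 0 := ((E₁ q).equation_iff_nonsingular_of_Δ_ne_zero hΔ).mp hEq00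
  refine ⟨hΔ, hEq00, hP, ?_⟩
  -- coordinates of the multiples of P
  set x2 : RatFunc ℂ := κ * τ with hx2def
  set y2 : RatFunc ℂ := κ^2 * τ^2 with hy2def
  set x3 : RatFunc ℂ := κ * τ * (1 - τ) with hx3def
  set y3 : RatFunc ℂ := κ * τ^2 * (1 - τ) with hy3def
  set x4 : RatFunc ℂ := τ with hx4def
  set y4 : RatFunc ℂ := (κ - 1) * τ with hy4def
  set dn : RatFunc ℂ := κ * τ - κ + 1 with hdndef
  have hdn0 : dn ≠ 0 := by
    have : dn = algebraMap (Polynomial ℂ) (RatFunc ℂ) (C q * X - C q + 1) := by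
      simp only [hdndef, map_add, map_sub, map_mul, map_one,
        RatFunc.algebraMap_C, RatFunc.algebraMap_X, hκdef, hτdef]
      rfl
    rw [this]
    exact hAne _ 1 (by simp)
  set x7 : RatFunc ℂ := κ*(κ - 1)*τ*(τ - 1)*(τ - κ + 1)/dn^2 with hx7def
  set y7 : RatFunc ℂ := κ*(κ - 1)^2*τ^2*(-(κ*(κ - 1)) + (2*κ^2 - 2*κ + 1)*τ
    - (κ^2 - κ + 1)*τ^2)/dn^3 with hy7def
  -- 2P = P + P
  have hyP : (0 : RatFunc ℂ) ≠ (E₁ q).negY 0 0 := by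
    rw [WeierstrassCurve.Affine.negY, hA1, hA3]
    intro hcon
    exact mul_ne_zero (mul_ne_zero hκ0 hτ0) hτ1 (by linear_combination hcon)
  have hslP : (E₁ q).slope 0 0 0 0 = 0 := by
    rw [slope_of_Y_ne rfl hyP]
    simp [hA4]
  obtain ⟨h2, e2⟩ := add_eq hP hP (fun _ => hyP)
    (show (E₁ q).addX 0 0 _ = x2 by
      rw [hslP, WeierstrassCurve.Affine.addX, hA1, hA2, hx2def]; ring)
    (show (E₁ q).addY 0 0 0 _ = y2 by
      rw [hslP, WeierstrassCurve.Affine.addY, WeierstrassCurve.Affine.negAddY,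
        WeierstrassCurve.Affine.addX, WeierstrassCurve.Affine.negY, hA1, hA2, hA3, hy2def]; ring)
  -- 3P = 2P + P
  have hne2 : x2 ≠ 0 := mul_ne_zero hκ0 hτ0
  have hsl2 : (E₁ q).slope x2 0 y2 0 = κ * τ := by
    rw [slope_of_X_ne hne2, hx2def, hy2def]
    field_simp
    ring
  obtain ⟨h3, e3⟩ := add_eq h2 hP (fun hx => absurd hx hne2)
    (show (E₁ q).addX x2 0 _ = x3 by
      rw [hsl2, WeierstrassCurve.Affine.addX, hA1, hA2, hx2def, hx3def]; ring)
    (show (E₁ q).addY x2 0 y2 _ = y3 by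
      rw [hsl2, WeierstrassCurve.Affine.addY, WeierstrassCurve.Affine.negAddY,
        WeierstrassCurve.Affine.addX, WeierstrassCurve.Affine.negY, hA1, hA2, hA3,
        hx2def, hy2def, hy3def]; ring)
  -- 4P = 2P + 2P
  have hs3 : y2 - (E₁ q).negY x2 y2 = κ^2 * τ^2 := by
    rw [WeierstrassCurve.Affine.negY, hA1, hA3, hx2def, hy2def]; ring
  have hyne3 : y2 ≠ (E₁ q).negY x2 y2 := sub_ne_zero.mp (by
    rw [hs3]; exact mul_ne_zero (pow_ne_zero _ hκ0) (pow_ne_zero _ hτ0))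
  have hsl3 : (E₁ q).slope x2 x2 y2 y2 = (κ + 1) * τ := by
    rw [slope_of_Y_ne rfl hyne3, hs3, hA1, hA2, hA4, hx2def, hy2def]
    field_simp
    rw [hx4def]
    field_simp [show τ ≠ 0 from hτ0]
    ring
  obtain ⟨h4, e4⟩ := add_eq h2 h2 (fun _ => hyne3)
    (show (E₁ q).addX x2 x2 _ = x4 by
      rw [hsl3, WeierstrassCurve.Affine.addX, hA1, hA2, hx2def, hx4def]; ring)
    (show (E₁ q).addY x2 x2 y2 _ = y4 by
      rw [hsl3, WeierstrassCurve.Affine.addY, WeierstrassCurve.Affine.negAddY,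
        WeierstrassCurve.Affine.addX, WeierstrassCurve.Affine.negY, hA1, hA2, hA3,
        hx2def, hy2def, hy4def]; ring)
  -- 7P = 3P + 4P
  have hx34 : x3 - x4 = τ * ((κ - κ*τ) - 1) := by rw [hx3def, hx4def]; ring
  have hne34 : x3 ≠ x4 := by
    refine sub_ne_zero.mp ?_
    rw [hx34]
    refine mul_ne_zero hτ0 ?_
    have : (κ - κ*τ) - 1 = algebraMap (Polynomial ℂ) (RatFunc ℂ) ((C q - C q * X) - 1) := by
      simp only [map_sub, map_mul, map_one, RatFunc.algebraMap_C, RatFunc.algebraMap_X,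
        hκdef, hτdef]
      rfl
    rw [this]
    exact hAne _ 1 (by simpa using hq1')
  have hsl4 : (E₁ q).slope x3 x4 y3 y4 = (κ*τ^2 - κ*τ + κ - 1) / dn := by
    rw [slope_of_X_ne hne34, hx3def, hx4def, hy3def, hy4def, hdndef]
    rw [div_eq_div_iff (by rw [← hx3def, ← hx4def]; exact sub_ne_zero.mpr hne34)
      (by rw [← hdndef]; exact hdn0)]
    ring
  obtain ⟨h7, e7⟩ := add_eq h3 h4 (fun hx => absurd hx hne34)
    (show (E₁ q).addX x3 x4 _ = x7 by
      rw [hsl4, WeierstrassCurve.Affine.addX, hA1, hA2, hx3def, hx4def, hx7def]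
      field_simp [hdn0]
      ring)
    (show (E₁ q).addY x3 x4 y3 _ = y7 by
      rw [hsl4, WeierstrassCurve.Affine.addY, WeierstrassCurve.Affine.negAddY,
        WeierstrassCurve.Affine.addX, WeierstrassCurve.Affine.negY, hA1, hA2, hA3,
        hx3def, hx4def, hy3def, hy7def]
      field_simp [hdn0]
      ring)
  have e7' : (7 : ℕ) • (Point.some _ _ hP) = Point.some _ _ h7 := by
    have h7eq : (7 : ℕ) • (Point.some _ _ hP) =
        ((Point.some _ _ hP + Point.some _ _ hP) + Point.some _ _ hP)
          + ((Point.some _ _ hP + Point.some _ _ hP) + (Point.some _ _ hP + Point.some _ _ hP)) := by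
      abel
    rw [h7eq, e2, e3, e4, e7]
  -- ===== pass to Laurent series at t₀ = (q-1)/q =====
  intro k hk hcontra
  set t₀ : ℂ := (q - 1)/q with ht₀def
  have hqt : q * t₀ = q - 1 := by rw [ht₀def]; field_simp
  have ht₀0 : t₀ ≠ 0 := div_ne_zero hq1' hq0
  have ht₀1 : t₀ - 1 ≠ 0 := by
    have h : t₀ - 1 = -(1/q) := by rw [ht₀def]; field_simp; ring
    rw [h]; exact neg_ne_zero.mpr (one_div_ne_zero hq0)
  have ht₀q : t₀ - q + 1 ≠ 0 := by
    have h : t₀ - q + 1 = -((q-1)^2/q) := by rw [ht₀def]; field_simp; ring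
    rw [h]; exact neg_ne_zero.mpr (div_ne_zero (pow_ne_zero _ hq1') hq0)
  set φ : RatFunc ℂ →+* LS := phi t₀ with hφdef
  have hφinj : Function.Injective φ := φ.injective
  set Np : Polynomial ℂ := C q * (C q - 1) * X * (X - 1) * (X - C q + 1) with hNp
  set Nyp : Polynomial ℂ := C q * (C q - 1)^2 * X^2 * (-(C q*(C q - 1))
    + (2*C q^2 - 2*C q + 1)*X - (C q^2 - C q + 1)*X^2) with hNyp
  set dp : Polynomial ℂ := C q * X - C q + 1 with hdp
  have hdnA : dn = algebraMap (Polynomial ℂ) (RatFunc ℂ) dp := by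
    rw [hdndef, hdp]
    simp only [map_add, map_sub, map_mul, map_one, RatFunc.algebraMap_C, RatFunc.algebraMap_X,
      hκdef, hτdef]
    rfl
  have hx7A : x7 = algebraMap (Polynomial ℂ) (RatFunc ℂ) Np
      / (algebraMap (Polynomial ℂ) (RatFunc ℂ) dp)^2 := by
    rw [hx7def, hdnA, hNp]
    simp only [map_add, map_sub, map_mul, map_one, RatFunc.algebraMap_C, RatFunc.algebraMap_X,
      hκdef, hτdef]
    rfl
  have hy7A : y7 = algebraMap (Polynomial ℂ) (RatFunc ℂ) Nyp
      / (algebraMap (Polynomial ℂ) (RatFunc ℂ) dp)^3 := by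
    rw [hy7def, hdnA, hNyp]
    simp only [map_add, map_sub, map_neg, map_mul, map_one, map_pow, map_ofNat,
      RatFunc.algebraMap_C, RatFunc.algebraMap_X, hκdef, hτdef]
    rfl
  -- Lead of φ(dn)
  have hσdp : sigmaT t₀ dp = C q * X := by
    rw [sigmaT_apply, hdp]
    simp only [sub_comp, add_comp, mul_comp, C_comp, X_comp, one_comp]
    have hC : (C (q * t₀) : Polynomial ℂ) = C q - 1 := by rw [hqt, map_sub, map_one]
    rw [mul_add, ← C_mul, hC]
    ring
  have hLdp : Lead 1 q (φ (algebraMap (Polynomial ℂ) (RatFunc ℂ) dp)) := by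
    rw [hφdef, phi_A, hσdp]
    refine ⟨0, ?_⟩
    rw [zpow_one]
    have h : ((C q * X : Polynomial ℂ) : PowerSeries ℂ) = PowerSeries.C q * PowerSeries.X := by
      push_cast; rfl
    rw [h, map_mul]
    simp only [mul_zero, add_zero, OSX]
    ring
  -- leading coefficients of x₇, y₇ over LS
  set cc : ℂ := Np.eval t₀ / (q*q) with hccdef
  set dd : ℂ := Nyp.eval t₀ / (q*(q*q)) with hdddef
  have hcc0 : cc ≠ 0 := by
    rw [hccdef]
    refine div_ne_zero ?_ (mul_ne_zero hq0 hq0)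
    rw [hNp]
    simp only [eval_add, eval_sub, eval_mul, eval_one, eval_C, eval_X]
    exact mul_ne_zero (mul_ne_zero (mul_ne_zero (mul_ne_zero hq0 hq1') ht₀0) ht₀1) ht₀q
  have hdd0 : dd ≠ 0 := by
    rw [hdddef]
    refine div_ne_zero ?_ (mul_ne_zero hq0 (mul_ne_zero hq0 hq0))
    rw [hNyp]
    simp only [eval_add, eval_sub, eval_neg, eval_mul, eval_one, eval_pow, eval_ofNat,
      eval_C, eval_X]
    refine mul_ne_zero (mul_ne_zero (mul_ne_zero hq0 (pow_ne_zero _ hq1'))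
      (pow_ne_zero _ ht₀0)) ?_
    have h : -(q*(q - 1)) + (2*q^2 - 2*q + 1)*t₀ - (q^2 - q + 1)*t₀^2 = -((q-1)^2/q^2) := by
      rw [ht₀def]; field_simp; ring
    rw [h]
    exact neg_ne_zero.mpr (div_ne_zero (pow_ne_zero _ hq1') (pow_ne_zero _ hq0))
  have hLx7 : Lead (-2) cc (φ x7) := by
    rw [hx7A, map_div₀, map_pow]
    have h2 : Lead 2 (q*q) ((φ (algebraMap (Polynomial ℂ) (RatFunc ℂ) dp))^2) := by
      rw [sq]
      exact (hLdp.mul hLdp).index_congr (by norm_num)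
    have h1 : Lead 0 (Np.eval t₀) (φ (algebraMap (Polynomial ℂ) (RatFunc ℂ) Np)) := by
      rw [hφdef]; exact lead_phi t₀ Np
    exact ((h1.div h2 (mul_ne_zero hq0 hq0)).index_congr (by norm_num)).congr rfl
  have hLy7 : Lead (-3) dd (φ y7) := by
    rw [hy7A, map_div₀, map_pow]
    have h3 : Lead 3 (q*(q*q)) ((φ (algebraMap (Polynomial ℂ) (RatFunc ℂ) dp))^3) := by
      rw [pow_succ, sq]
      exact ((hLdp.mul hLdp).mul hLdp).index_congr (by norm_num) |>.congr (by ring)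
    have h1 : Lead 0 (Nyp.eval t₀) (φ (algebraMap (Polynomial ℂ) (RatFunc ℂ) Nyp)) := by
      rw [hφdef]; exact lead_phi t₀ Nyp
    exact ((h1.div h3 (mul_ne_zero hq0 (mul_ne_zero hq0 hq0))).index_congr (by norm_num)).congr rfl
  -- the mapped curve and its point
  have h7L : ((E₁ q).map φ).toAffine.Nonsingular (φ x7) (φ y7) :=
    ((E₁ q).map_nonsingular hφinj x7 y7).mpr h7
  have hW1 : Ordge 0 ((E₁ q).map φ).toAffine.a₁ := by
    show Ordge 0 (φ (algebraMap (Polynomial ℂ) (RatFunc ℂ) (1 - C (q+1)*X)))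
    rw [hφdef]; exact (lead_phi t₀ _).ordge
  have hW2 : Ordge 0 ((E₁ q).map φ).toAffine.a₂ := by
    show Ordge 0 (φ (algebraMap (Polynomial ℂ) (RatFunc ℂ) (-(C q*X))))
    rw [hφdef]; exact (lead_phi t₀ _).ordge
  have hW3 : Ordge 0 ((E₁ q).map φ).toAffine.a₃ := by
    show Ordge 0 (φ (algebraMap (Polynomial ℂ) (RatFunc ℂ) (C q*X*(X - 1))))
    rw [hφdef]; exact (lead_phi t₀ _).ordge
  have hW4 : Ordge 0 ((E₁ q).map φ).toAffine.a₄ := by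
    show Ordge 0 (φ 0)
    rw [_root_.map_zero]
    exact ordge_zero 0
  have hW6 : Ordge 0 ((E₁ q).map φ).toAffine.a₆ := by
    show Ordge 0 (φ 0)
    rw [_root_.map_zero]
    exact ordge_zero 0
  -- the relation d² = c³
  have EqL : ((E₁ q).map φ).toAffine.Equation (φ x7) (φ y7) := h7L.1
  have heqn := (((E₁ q).map φ).toAffine.equation_iff (φ x7) (φ y7)).mp EqL
  have hcd : dd*dd - cc*(cc*cc) = 0 := by
    have hrel : (φ y7)*(φ y7) - (φ x7)*((φ x7)*(φ x7)) =
        -(((E₁ q).map φ).toAffine.a₁*(φ x7)*(φ y7)) - ((E₁ q).map φ).toAffine.a₃*(φ y7)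
        + ((E₁ q).map φ).toAffine.a₂*((φ x7)*(φ x7)) + ((E₁ q).map φ).toAffine.a₄*(φ x7)
        + ((E₁ q).map φ).toAffine.a₆ := by linear_combination heqn
    have hL6 : Lead (-6) (dd*dd - cc*(cc*cc)) ((φ y7)*(φ y7) - (φ x7)*((φ x7)*(φ x7))) :=
      ((hLy7.mul hLy7).index_congr (by norm_num)).sub
        ((hLx7.mul (hLx7.mul hLx7)).index_congr (by norm_num))
    have hR5 : Ordge (-5) (-(((E₁ q).map φ).toAffine.a₁*(φ x7)*(φ y7))
        - ((E₁ q).map φ).toAffine.a₃*(φ y7)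
        + ((E₁ q).map φ).toAffine.a₂*((φ x7)*(φ x7)) + ((E₁ q).map φ).toAffine.a₄*(φ x7)
        + ((E₁ q).map φ).toAffine.a₆) := by
      have j1 : Ordge (-5) (-(((E₁ q).map φ).toAffine.a₁*(φ x7)*(φ y7))) := by
        refine Ordge.neg (Ordge.index_congr ?_ (by norm_num : (0:ℤ) + -2 + -3 = -5))
        exact (hW1.mul hLx7.ordge).mul hLy7.ordge
      have j2 : Ordge (-5) (((E₁ q).map φ).toAffine.a₃*(φ y7)) :=
        Ordge.mono (by norm_num) ((hW3.mul hLy7.ordge).index_congr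
          (show (0:ℤ) + -3 = -3 by norm_num))
      have j3 : Ordge (-5) (((E₁ q).map φ).toAffine.a₂*((φ x7)*(φ x7))) :=
        Ordge.mono (by norm_num) ((hW2.mul (hLx7.ordge.mul hLx7.ordge)).index_congr
          (show (0:ℤ) + (-2 + -2) = -4 by norm_num))
      have j4 : Ordge (-5) (((E₁ q).map φ).toAffine.a₄*(φ x7)) :=
        Ordge.mono (by norm_num) ((hW4.mul hLx7.ordge).index_congr
          (show (0:ℤ) + -2 = -2 by norm_num))
      have j5 : Ordge (-5) (((E₁ q).map φ).toAffine.a₆) := hW6.mono (by norm_num)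
      exact (((j1.sub j2).add j3).add j4).add j5
    exact (hL6.of_eq hrel).zero_of_ordge (hR5.index_congr (by norm_num))
  have hdd2 : dd^2 = cc^3 := by linear_combination hcd
  set γ : ℂ := dd/cc with hγdef
  have hγ0 : γ ≠ 0 := div_ne_zero hdd0 hcc0
  have hγ2 : γ^2 = cc := by
    rw [hγdef, div_pow]
    rw [hdd2]
    rw [pow_succ]
    field_simp
  have hγ3 : γ^3 = dd := by
    rw [hγdef, div_pow]
    have h : dd^3 = dd * cc^3 := by rw [← hdd2]; ring
    rw [h]
    field_simp
  -- apply the key lemma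
  obtain ⟨xk, yk, hk', heqk, _, _⟩ := key hW1 hW2 hW3 hW4 h7L hγ0
    (hLx7.congr hγ2.symm) (hLy7.congr hγ3.symm) k hk
  -- derive the contradiction
  have h7k : k • (Point.some _ _ h7) = 0 := by
    rw [← e7', smul_smul, mul_comm, ← smul_smul, hcontra, smul_zero]
  have hmap := map_nsmul (ptMap (E₁ q) φ) k (Point.some _ _ h7)
  rw [h7k, _root_.map_zero, ptMap_some] at hmap
  rw [show ((E₁ q).map_nonsingular φ.injective x7 y7).mpr h7 = h7L from rfl] at hmap
  rw [heqk] at hmap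
  exact some_ne_zero hk' hmap.symm
end

section
/- For every q ∈ ℂ with q ∉ {0,1} and each m = 1,2,3,4,5,6, the multiple m•P of P = (0,0) on E₁(q) is a nonzero affine point whose coordinates x(mP), y(mP) ∈ ℂ(T) are polynomials in T of degree at most 2 and at most 3 respectively; that is, each of P, 2P, 3P, 4P, 5P, 6P is an integral point of the arithmetic-genus-1 model E₁(q). -/
set_option maxHeartbeats 1000000

open Polynomial WeierstrassCurve

/-- `Q` is a nonzero point whose coordinates are polynomials in `T` of degrees
at most `2n` and `3n` respectively: an integral point of the genus-`n` model. -/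
def IsIntegralPoint (n : ℕ) {W : WeierstrassCurve.Affine (RatFunc ℂ)}
    (Q : W.Point) : Prop :=
  ∃ (x y : RatFunc ℂ) (h : W.Nonsingular x y) (px py : Polynomial ℂ),
    Q = WeierstrassCurve.Affine.Point.some x y h ∧
    x = algebraMap (Polynomial ℂ) (RatFunc ℂ) px ∧
    y = algebraMap (Polynomial ℂ) (RatFunc ℂ) py ∧
    px.degree ≤ (2 * n : ℕ) ∧ py.degree ≤ (3 * n : ℕ)

lemma E₁a₁ (q : ℂ) : (E₁ q).a₁ = 1 - (RatFunc.C q + 1) * RatFunc.X := by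
  simp [E₁, map_sub, map_mul, map_one, map_add, RatFunc.algebraMap_C, RatFunc.algebraMap_X]
lemma E₁a₂ (q : ℂ) : (E₁ q).a₂ = -(RatFunc.C q * RatFunc.X) := by
  simp [E₁, map_neg, map_mul, RatFunc.algebraMap_C, RatFunc.algebraMap_X]
lemma E₁a₃ (q : ℂ) : (E₁ q).a₃ = RatFunc.C q * RatFunc.X * (RatFunc.X - 1) := by
  simp [E₁, map_sub, map_mul, map_one, RatFunc.algebraMap_C, RatFunc.algebraMap_X]
lemma E₁a₄ (q : ℂ) : (E₁ q).a₄ = 0 := rfl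
lemma E₁a₆ (q : ℂ) : (E₁ q).a₆ = 0 := rfl

lemma some_congr {W : WeierstrassCurve.Affine (RatFunc ℂ)} {x₁ y₁ x₂ y₂ : RatFunc ℂ}
    {h₁ : W.Nonsingular x₁ y₁} (h₂ : W.Nonsingular x₂ y₂) (hx : x₁ = x₂) (hy : y₁ = y₂) :
    WeierstrassCurve.Affine.Point.some _ _ h₁ = WeierstrassCurve.Affine.Point.some _ _ h₂ := by
  subst hx; subst hy; rfl

open Classical in
theorem stmt_1 (q : ℂ) (hq0 : q ≠ 0) (hq1 : q ≠ 1) :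
    ∃ h : (E₁ q).Nonsingular 0 0,
      ∀ m : ℕ, 1 ≤ m → m ≤ 6 →
        IsIntegralPoint 1 (m • (WeierstrassCurve.Affine.Point.some 0 0 h)) := by
  have h0 : RatFunc.C q ≠ 0 := by
    simpa using (map_ne_zero_iff (RatFunc.C (K := ℂ)) (RatFunc.C (K := ℂ)).injective).mpr hq0
  have hd : RatFunc.C q - 1 ≠ 0 := by
    rw [sub_ne_zero]
    exact fun h => hq1 ((RatFunc.C (K := ℂ)).injective (by simpa using h))
  have hXne : (RatFunc.X : RatFunc ℂ) ≠ 0 := RatFunc.X_ne_zero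
  have hX1 : (RatFunc.X : RatFunc ℂ) ≠ 1 := by
    intro h
    have h2 : (X : ℂ[X]) = 1 :=
      RatFunc.algebraMap_injective ℂ (by simpa [RatFunc.algebraMap_X] using h)
    have h3 := congrArg (fun p => Polynomial.coeff p 1) h2
    simp [Polynomial.coeff_one] at h3
  have h1t : (1 : RatFunc ℂ) - RatFunc.X ≠ 0 := fun h => hX1 (by linear_combination -h)
  have ht1 : (RatFunc.X : RatFunc ℂ) - 1 ≠ 0 := sub_ne_zero.mpr hX1
  have ha3 : RatFunc.C q * RatFunc.X * (RatFunc.X - 1) ≠ 0 :=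
    mul_ne_zero (mul_ne_zero h0 hXne) ht1
  have h1 : (E₁ q).Nonsingular 0 0 := by
    refine ((E₁ q).nonsingular_iff' 0 0).mpr ⟨?_, Or.inr ?_⟩
    · rw [(E₁ q).equation_iff' 0 0, E₁a₁, E₁a₂, E₁a₃, E₁a₄, E₁a₆]; ring
    · rw [E₁a₁, E₁a₃]
      intro h
      exact ha3 (by linear_combination h)
  have hy1 : (0 : RatFunc ℂ) ≠ (E₁ q).negY 0 0 := by
    rw [WeierstrassCurve.Affine.negY, E₁a₁, E₁a₃]
    intro h
    exact ha3 (by linear_combination h)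
  have hL1 : (E₁ q).slope 0 0 0 0 = 0 := by
    rw [WeierstrassCurve.Affine.slope_of_Y_ne rfl hy1, E₁a₁, E₁a₄]
    simp
  have hax1 : (E₁ q).addX 0 0 ((E₁ q).slope 0 0 0 0) = RatFunc.C q * RatFunc.X := by
    rw [WeierstrassCurve.Affine.addX, hL1, E₁a₁, E₁a₂]; ring
  have hnay1 : (E₁ q).negAddY 0 0 0 ((E₁ q).slope 0 0 0 0)
      = -(RatFunc.C q ^ 2 * RatFunc.X ^ 2) - (1 - (RatFunc.C q + 1) * RatFunc.X) * (RatFunc.C q * RatFunc.X) - RatFunc.C q * RatFunc.X * (RatFunc.X - 1) := by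
    rw [WeierstrassCurve.Affine.negAddY, hax1, hL1]; ring
  have hay1 : (E₁ q).addY 0 0 0 ((E₁ q).slope 0 0 0 0) = RatFunc.C q ^ 2 * RatFunc.X ^ 2 := by
    rw [WeierstrassCurve.Affine.addY, WeierstrassCurve.Affine.negY, hnay1, hax1, E₁a₁, E₁a₃]; ring
  have h2 : (E₁ q).Nonsingular (RatFunc.C q * RatFunc.X) (RatFunc.C q ^ 2 * RatFunc.X ^ 2) := by
    have hn := WeierstrassCurve.Affine.nonsingular_add h1 h1 (fun hh => hy1 hh.2)
    rwa [hax1, hay1] at hn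
  have e2 : (2 : ℕ) • WeierstrassCurve.Affine.Point.some _ _ h1 = WeierstrassCurve.Affine.Point.some _ _ h2 := by
    rw [two_nsmul, WeierstrassCurve.Affine.Point.add_self_of_Y_ne hy1]
    exact some_congr h2 hax1 hay1
  have hxne2 : (RatFunc.C q * RatFunc.X) ≠ (0 : RatFunc ℂ) := mul_ne_zero h0 hXne
  have hL2 : (E₁ q).slope (RatFunc.C q * RatFunc.X) 0 (RatFunc.C q ^ 2 * RatFunc.X ^ 2) 0 = ((RatFunc.C q ^ 2 * RatFunc.X ^ 2) - 0) / ((RatFunc.C q * RatFunc.X) - 0) :=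
    WeierstrassCurve.Affine.slope_of_X_ne hxne2
  have hax2 : (E₁ q).addX (RatFunc.C q * RatFunc.X) 0 ((E₁ q).slope (RatFunc.C q * RatFunc.X) 0 (RatFunc.C q ^ 2 * RatFunc.X ^ 2) 0) = RatFunc.C q * RatFunc.X * (1 - RatFunc.X) := by
    rw [WeierstrassCurve.Affine.addX, hL2, E₁a₁, E₁a₂]
    field_simp
    ring
  have hnay2 : (E₁ q).negAddY (RatFunc.C q * RatFunc.X) 0 (RatFunc.C q ^ 2 * RatFunc.X ^ 2) ((E₁ q).slope (RatFunc.C q * RatFunc.X) 0 (RatFunc.C q ^ 2 * RatFunc.X ^ 2) 0)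
      = -(RatFunc.C q * RatFunc.X ^ 2 * (1 - RatFunc.X)) - (1 - (RatFunc.C q + 1) * RatFunc.X) * (RatFunc.C q * RatFunc.X * (1 - RatFunc.X)) - RatFunc.C q * RatFunc.X * (RatFunc.X - 1) := by
    rw [WeierstrassCurve.Affine.negAddY, hax2, hL2]
    field_simp
    ring
  have hay2 : (E₁ q).addY (RatFunc.C q * RatFunc.X) 0 (RatFunc.C q ^ 2 * RatFunc.X ^ 2) ((E₁ q).slope (RatFunc.C q * RatFunc.X) 0 (RatFunc.C q ^ 2 * RatFunc.X ^ 2) 0) = RatFunc.C q * RatFunc.X ^ 2 * (1 - RatFunc.X) := by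
    rw [WeierstrassCurve.Affine.addY, WeierstrassCurve.Affine.negY, hnay2, hax2, E₁a₁, E₁a₃]
    ring
  have h3 : (E₁ q).Nonsingular (RatFunc.C q * RatFunc.X * (1 - RatFunc.X)) (RatFunc.C q * RatFunc.X ^ 2 * (1 - RatFunc.X)) := by
    have hn := WeierstrassCurve.Affine.nonsingular_add h2 h1 (fun hh => absurd hh.1 hxne2)
    rwa [hax2, hay2] at hn
  have e3 : (3 : ℕ) • WeierstrassCurve.Affine.Point.some _ _ h1 = WeierstrassCurve.Affine.Point.some _ _ h3 := by
    rw [show (3 : ℕ) = 2 + 1 from rfl, succ_nsmul, e2,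
      WeierstrassCurve.Affine.Point.add_of_X_ne hxne2]
    exact some_congr h3 hax2 hay2
  have hxne3 : (RatFunc.C q * RatFunc.X * (1 - RatFunc.X)) ≠ (0 : RatFunc ℂ) := mul_ne_zero (mul_ne_zero h0 hXne) h1t
  have hL3 : (E₁ q).slope (RatFunc.C q * RatFunc.X * (1 - RatFunc.X)) 0 (RatFunc.C q * RatFunc.X ^ 2 * (1 - RatFunc.X)) 0 = ((RatFunc.C q * RatFunc.X ^ 2 * (1 - RatFunc.X)) - 0) / ((RatFunc.C q * RatFunc.X * (1 - RatFunc.X)) - 0) :=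
    WeierstrassCurve.Affine.slope_of_X_ne hxne3
  have hax3 : (E₁ q).addX (RatFunc.C q * RatFunc.X * (1 - RatFunc.X)) 0 ((E₁ q).slope (RatFunc.C q * RatFunc.X * (1 - RatFunc.X)) 0 (RatFunc.C q * RatFunc.X ^ 2 * (1 - RatFunc.X)) 0) = RatFunc.X := by
    rw [WeierstrassCurve.Affine.addX, hL3, E₁a₁, E₁a₂]
    field_simp
    ring
  have hnay3 : (E₁ q).negAddY (RatFunc.C q * RatFunc.X * (1 - RatFunc.X)) 0 (RatFunc.C q * RatFunc.X ^ 2 * (1 - RatFunc.X)) ((E₁ q).slope (RatFunc.C q * RatFunc.X * (1 - RatFunc.X)) 0 (RatFunc.C q * RatFunc.X ^ 2 * (1 - RatFunc.X)) 0)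
      = -((RatFunc.C q - 1) * RatFunc.X) - (1 - (RatFunc.C q + 1) * RatFunc.X) * (RatFunc.X) - RatFunc.C q * RatFunc.X * (RatFunc.X - 1) := by
    rw [WeierstrassCurve.Affine.negAddY, hax3, hL3]
    field_simp
    ring
  have hay3 : (E₁ q).addY (RatFunc.C q * RatFunc.X * (1 - RatFunc.X)) 0 (RatFunc.C q * RatFunc.X ^ 2 * (1 - RatFunc.X)) ((E₁ q).slope (RatFunc.C q * RatFunc.X * (1 - RatFunc.X)) 0 (RatFunc.C q * RatFunc.X ^ 2 * (1 - RatFunc.X)) 0) = (RatFunc.C q - 1) * RatFunc.X := by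
    rw [WeierstrassCurve.Affine.addY, WeierstrassCurve.Affine.negY, hnay3, hax3, E₁a₁, E₁a₃]
    ring
  have h4 : (E₁ q).Nonsingular (RatFunc.X) ((RatFunc.C q - 1) * RatFunc.X) := by
    have hn := WeierstrassCurve.Affine.nonsingular_add h3 h1 (fun hh => absurd hh.1 hxne3)
    rwa [hax3, hay3] at hn
  have e4 : (4 : ℕ) • WeierstrassCurve.Affine.Point.some _ _ h1 = WeierstrassCurve.Affine.Point.some _ _ h4 := by
    rw [show (4 : ℕ) = 3 + 1 from rfl, succ_nsmul, e3,
      WeierstrassCurve.Affine.Point.add_of_X_ne hxne3]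
    exact some_congr h4 hax3 hay3
  have hxne4 : (RatFunc.X) ≠ (0 : RatFunc ℂ) := hXne
  have hL4 : (E₁ q).slope (RatFunc.X) 0 ((RatFunc.C q - 1) * RatFunc.X) 0 = (((RatFunc.C q - 1) * RatFunc.X) - 0) / ((RatFunc.X) - 0) :=
    WeierstrassCurve.Affine.slope_of_X_ne hxne4
  have hax4 : (E₁ q).addX (RatFunc.X) 0 ((E₁ q).slope (RatFunc.X) 0 ((RatFunc.C q - 1) * RatFunc.X) 0) = RatFunc.C q * (RatFunc.C q - 1) * (1 - RatFunc.X) := by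
    rw [WeierstrassCurve.Affine.addX, hL4, E₁a₁, E₁a₂]
    field_simp
    ring
  have hnay4 : (E₁ q).negAddY (RatFunc.X) 0 ((RatFunc.C q - 1) * RatFunc.X) ((E₁ q).slope (RatFunc.X) 0 ((RatFunc.C q - 1) * RatFunc.X) 0)
      = -(-(RatFunc.C q ^ 2 * (RatFunc.C q - 1)) + RatFunc.C q ^ 2 * (2 * RatFunc.C q - 1) * RatFunc.X - RatFunc.C q ^ 3 * RatFunc.X ^ 2) - (1 - (RatFunc.C q + 1) * RatFunc.X) * (RatFunc.C q * (RatFunc.C q - 1) * (1 - RatFunc.X)) - RatFunc.C q * RatFunc.X * (RatFunc.X - 1) := by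
    rw [WeierstrassCurve.Affine.negAddY, hax4, hL4]
    field_simp
    ring
  have hay4 : (E₁ q).addY (RatFunc.X) 0 ((RatFunc.C q - 1) * RatFunc.X) ((E₁ q).slope (RatFunc.X) 0 ((RatFunc.C q - 1) * RatFunc.X) 0) = -(RatFunc.C q ^ 2 * (RatFunc.C q - 1)) + RatFunc.C q ^ 2 * (2 * RatFunc.C q - 1) * RatFunc.X - RatFunc.C q ^ 3 * RatFunc.X ^ 2 := by
    rw [WeierstrassCurve.Affine.addY, WeierstrassCurve.Affine.negY, hnay4, hax4, E₁a₁, E₁a₃]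
    ring
  have h5 : (E₁ q).Nonsingular (RatFunc.C q * (RatFunc.C q - 1) * (1 - RatFunc.X)) (-(RatFunc.C q ^ 2 * (RatFunc.C q - 1)) + RatFunc.C q ^ 2 * (2 * RatFunc.C q - 1) * RatFunc.X - RatFunc.C q ^ 3 * RatFunc.X ^ 2) := by
    have hn := WeierstrassCurve.Affine.nonsingular_add h4 h1 (fun hh => absurd hh.1 hxne4)
    rwa [hax4, hay4] at hn
  have e5 : (5 : ℕ) • WeierstrassCurve.Affine.Point.some _ _ h1 = WeierstrassCurve.Affine.Point.some _ _ h5 := by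
    rw [show (5 : ℕ) = 4 + 1 from rfl, succ_nsmul, e4,
      WeierstrassCurve.Affine.Point.add_of_X_ne hxne4]
    exact some_congr h5 hax4 hay4
  have hxne5 : (RatFunc.C q * (RatFunc.C q - 1) * (1 - RatFunc.X)) ≠ (0 : RatFunc ℂ) := mul_ne_zero (mul_ne_zero h0 hd) h1t
  have hL5 : (E₁ q).slope (RatFunc.C q * (RatFunc.C q - 1) * (1 - RatFunc.X)) 0 (-(RatFunc.C q ^ 2 * (RatFunc.C q - 1)) + RatFunc.C q ^ 2 * (2 * RatFunc.C q - 1) * RatFunc.X - RatFunc.C q ^ 3 * RatFunc.X ^ 2) 0 = ((-(RatFunc.C q ^ 2 * (RatFunc.C q - 1)) + RatFunc.C q ^ 2 * (2 * RatFunc.C q - 1) * RatFunc.X - RatFunc.C q ^ 3 * RatFunc.X ^ 2) - 0) / ((RatFunc.C q * (RatFunc.C q - 1) * (1 - RatFunc.X)) - 0) :=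
    WeierstrassCurve.Affine.slope_of_X_ne hxne5
  have hax5 : (E₁ q).addX (RatFunc.C q * (RatFunc.C q - 1) * (1 - RatFunc.X)) 0 ((E₁ q).slope (RatFunc.C q * (RatFunc.C q - 1) * (1 - RatFunc.X)) 0 (-(RatFunc.C q ^ 2 * (RatFunc.C q - 1)) + RatFunc.C q ^ 2 * (2 * RatFunc.C q - 1) * RatFunc.X - RatFunc.C q ^ 3 * RatFunc.X ^ 2) 0) = -(RatFunc.C q / (RatFunc.C q - 1)) * RatFunc.X + (RatFunc.C q / (RatFunc.C q - 1)) ^ 2 * RatFunc.X ^ 2 := by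
    rw [WeierstrassCurve.Affine.addX, hL5, E₁a₁, E₁a₂]
    field_simp
    ring
  have hnay5 : (E₁ q).negAddY (RatFunc.C q * (RatFunc.C q - 1) * (1 - RatFunc.X)) 0 (-(RatFunc.C q ^ 2 * (RatFunc.C q - 1)) + RatFunc.C q ^ 2 * (2 * RatFunc.C q - 1) * RatFunc.X - RatFunc.C q ^ 3 * RatFunc.X ^ 2) ((E₁ q).slope (RatFunc.C q * (RatFunc.C q - 1) * (1 - RatFunc.X)) 0 (-(RatFunc.C q ^ 2 * (RatFunc.C q - 1)) + RatFunc.C q ^ 2 * (2 * RatFunc.C q - 1) * RatFunc.X - RatFunc.C q ^ 3 * RatFunc.X ^ 2) 0)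
      = -((RatFunc.C q / (RatFunc.C q - 1)) ^ 2 * RatFunc.X ^ 2 - (RatFunc.C q ^ 2 / (RatFunc.C q - 1) ^ 3) * RatFunc.X ^ 3) - (1 - (RatFunc.C q + 1) * RatFunc.X) * (-(RatFunc.C q / (RatFunc.C q - 1)) * RatFunc.X + (RatFunc.C q / (RatFunc.C q - 1)) ^ 2 * RatFunc.X ^ 2) - RatFunc.C q * RatFunc.X * (RatFunc.X - 1) := by
    rw [WeierstrassCurve.Affine.negAddY, hax5, hL5]
    field_simp
    ring
  have hay5 : (E₁ q).addY (RatFunc.C q * (RatFunc.C q - 1) * (1 - RatFunc.X)) 0 (-(RatFunc.C q ^ 2 * (RatFunc.C q - 1)) + RatFunc.C q ^ 2 * (2 * RatFunc.C q - 1) * RatFunc.X - RatFunc.C q ^ 3 * RatFunc.X ^ 2) ((E₁ q).slope (RatFunc.C q * (RatFunc.C q - 1) * (1 - RatFunc.X)) 0 (-(RatFunc.C q ^ 2 * (RatFunc.C q - 1)) + RatFunc.C q ^ 2 * (2 * RatFunc.C q - 1) * RatFunc.X - RatFunc.C q ^ 3 * RatFunc.X ^ 2) 0) = (RatFunc.C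 q / (RatFunc.C q - 1)) ^ 2 * RatFunc.X ^ 2 - (RatFunc.C q ^ 2 / (RatFunc.C q - 1) ^ 3) * RatFunc.X ^ 3 := by
    rw [WeierstrassCurve.Affine.addY, WeierstrassCurve.Affine.negY, hnay5, hax5, E₁a₁, E₁a₃]
    ring
  have h6 : (E₁ q).Nonsingular (-(RatFunc.C q / (RatFunc.C q - 1)) * RatFunc.X + (RatFunc.C q / (RatFunc.C q - 1)) ^ 2 * RatFunc.X ^ 2) ((RatFunc.C q / (RatFunc.C q - 1)) ^ 2 * RatFunc.X ^ 2 - (RatFunc.C q ^ 2 / (RatFunc.C q - 1) ^ 3) * RatFunc.X ^ 3) := by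
    have hn := WeierstrassCurve.Affine.nonsingular_add h5 h1 (fun hh => absurd hh.1 hxne5)
    rwa [hax5, hay5] at hn
  have e6 : (6 : ℕ) • WeierstrassCurve.Affine.Point.some _ _ h1 = WeierstrassCurve.Affine.Point.some _ _ h6 := by
    rw [show (6 : ℕ) = 5 + 1 from rfl, succ_nsmul, e5,
      WeierstrassCurve.Affine.Point.add_of_X_ne hxne5]
    exact some_congr h6 hax5 hay5
  refine ⟨h1, ?_⟩
  intro m hm1 hm6
  interval_cases m
  · exact ⟨0, 0, h1, 0, 0, by rw [one_nsmul], by simp, by simp, by simp, by simp⟩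
  · refine ⟨RatFunc.C q * RatFunc.X, RatFunc.C q ^ 2 * RatFunc.X ^ 2, h2, Polynomial.C q * X, Polynomial.C (q ^ 2) * X ^ 2, e2, ?_, ?_, ?_, ?_⟩
    · simp only [map_add, map_sub, map_mul, map_neg, map_pow, map_one, map_div₀, map_ofNat,
        RatFunc.algebraMap_C, RatFunc.algebraMap_X]
      try ring
    · simp only [map_add, map_sub, map_mul, map_neg, map_pow, map_one, map_div₀, map_ofNat,
        RatFunc.algebraMap_C, RatFunc.algebraMap_X]
      try ring
    · compute_degree
      all_goals norm_num
    · compute_degree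
      all_goals norm_num
  · refine ⟨RatFunc.C q * RatFunc.X * (1 - RatFunc.X), RatFunc.C q * RatFunc.X ^ 2 * (1 - RatFunc.X), h3, Polynomial.C q * X * (1 - X), Polynomial.C q * X ^ 2 * (1 - X), e3, ?_, ?_, ?_, ?_⟩
    · simp only [map_add, map_sub, map_mul, map_neg, map_pow, map_one, map_div₀, map_ofNat,
        RatFunc.algebraMap_C, RatFunc.algebraMap_X]
      try ring
    · simp only [map_add, map_sub, map_mul, map_neg, map_pow, map_one, map_div₀, map_ofNat,
        RatFunc.algebraMap_C, RatFunc.algebraMap_X]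
      try ring
    · compute_degree
      all_goals norm_num
    · compute_degree
      all_goals norm_num
  · refine ⟨RatFunc.X, (RatFunc.C q - 1) * RatFunc.X, h4, X, Polynomial.C (q - 1) * X, e4, ?_, ?_, ?_, ?_⟩
    · simp only [map_add, map_sub, map_mul, map_neg, map_pow, map_one, map_div₀, map_ofNat,
        RatFunc.algebraMap_C, RatFunc.algebraMap_X]
      try ring
    · simp only [map_add, map_sub, map_mul, map_neg, map_pow, map_one, map_div₀, map_ofNat,
        RatFunc.algebraMap_C, RatFunc.algebraMap_X]
      try ring
    · compute_degree
      all_goals norm_num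
    · compute_degree
      all_goals norm_num
  · refine ⟨RatFunc.C q * (RatFunc.C q - 1) * (1 - RatFunc.X), -(RatFunc.C q ^ 2 * (RatFunc.C q - 1)) + RatFunc.C q ^ 2 * (2 * RatFunc.C q - 1) * RatFunc.X - RatFunc.C q ^ 3 * RatFunc.X ^ 2, h5, Polynomial.C (q * (q - 1)) * (1 - X), Polynomial.C (-(q ^ 2 * (q - 1))) + Polynomial.C (q ^ 2 * (2 * q - 1)) * X - Polynomial.C (q ^ 3) * X ^ 2, e5, ?_, ?_, ?_, ?_⟩
    · simp only [map_add, map_sub, map_mul, map_neg, map_pow, map_one, map_div₀, map_ofNat,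
        RatFunc.algebraMap_C, RatFunc.algebraMap_X]
      try ring
    · simp only [map_add, map_sub, map_mul, map_neg, map_pow, map_one, map_div₀, map_ofNat,
        RatFunc.algebraMap_C, RatFunc.algebraMap_X]
      try ring
    · compute_degree
      all_goals norm_num
    · compute_degree
      all_goals norm_num
  · refine ⟨-(RatFunc.C q / (RatFunc.C q - 1)) * RatFunc.X + (RatFunc.C q / (RatFunc.C q - 1)) ^ 2 * RatFunc.X ^ 2, (RatFunc.C q / (RatFunc.C q - 1)) ^ 2 * RatFunc.X ^ 2 - (RatFunc.C q ^ 2 / (RatFunc.C q - 1) ^ 3) * RatFunc.X ^ 3, h6, Polynomial.C (-(q / (q - 1))) * X + Polynomial.C ((q / (q - 1)) ^ 2) * X ^ 2, Polynomial.C ((q / (q - 1)) ^ 2) * X ^ 2 - Polynomial.C (q ^ 2 / (q - 1) ^ 3) * X ^ 3, e6, ?_, ?_, ?_, ?_⟩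
    · simp only [map_add, map_sub, map_mul, map_neg, map_pow, map_one, map_div₀, map_ofNat,
        RatFunc.algebraMap_C, RatFunc.algebraMap_X]
      try ring
    · simp only [map_add, map_sub, map_mul, map_neg, map_pow, map_one, map_div₀, map_ofNat,
        RatFunc.algebraMap_C, RatFunc.algebraMap_X]
      try ring
    · compute_degree
      all_goals norm_num
    · compute_degree
      all_goals norm_num
end

section
/- Let E be the elliptic curve over ℚ defined by Y² + XY = X³ − 139761580X + 1587303040400 and let P = (11480, 1217300). Then P lies on E, P has infinite order in E(ℚ) (k•P ≠ O for every positive integer k), and for each m = 1, 2, …, 14 the multiple m•P is a nonzero affine point both of whose coordinates are integers. -/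
open WeierstrassCurve

/-- The elliptic curve `Y² + XY = X³ − 139761580X + 1587303040400` over `ℚ`. -/
def E14 : WeierstrassCurve.Affine ℚ where
  a₁ := 1
  a₂ := 0
  a₃ := 0
  a₄ := -139761580
  a₆ := 1587303040400

theorem no_rat_root_quartic (x : ℚ)
    (h : x^4 - 45920*x^3 + 279511680*x^2 - 6280572569600*x - 53357243674112000 = 0) :
    False := by
  have hint : IsIntegral ℤ x := by
    refine ⟨Polynomial.X^4 + Polynomial.C (-45920) * Polynomial.X^3 +
      Polynomial.C 279511680 * Polynomial.X^2 + Polynomial.C (-6280572569600) * Polynomial.X +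
      Polynomial.C (-53357243674112000), ?_, ?_⟩
    · monicity!
    · simp only [Polynomial.eval₂_add, Polynomial.eval₂_mul, Polynomial.eval₂_pow,
        Polynomial.eval₂_X, Polynomial.eval₂_C, eq_intCast]
      norm_num
      linear_combination h
  obtain ⟨z, hz⟩ := IsIntegrallyClosed.isIntegral_iff.mp hint
  have hz' : (z : ℚ) = x := hz
  have hzz : z^4 - 45920*z^3 + 279511680*z^2 - 6280572569600*z - 53357243674112000 = 0 := by
    have : (z:ℚ)^4 - 45920*(z:ℚ)^3 + 279511680*(z:ℚ)^2 - 6280572569600*(z:ℚ)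
        - 53357243674112000 = 0 := by rw [hz']; exact h
    exact_mod_cast this
  have h11 : ((z : ZMod 11)^4 - 45920*(z : ZMod 11)^3 + 279511680*(z : ZMod 11)^2
      - 6280572569600*(z : ZMod 11) - 53357243674112000 : ZMod 11) = 0 := by
    have := congrArg (fun t : ℤ => (t : ZMod 11)) hzz
    push_cast at this
    exact this
  have : ∀ t : ZMod 11, t^4 - 45920*t^3 + 279511680*t^2 - 6280572569600*t
      - 53357243674112000 ≠ 0 := by decide
  exact this _ h11

theorem no_rat_root_cubic (u : ℚ)
    (h : u^3 + u^2 - 2236185280*u + 101587394585600 = 0) : False := by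
  have hint : IsIntegral ℤ u := by
    refine ⟨Polynomial.X^3 + Polynomial.C 1 * Polynomial.X^2 +
      Polynomial.C (-2236185280) * Polynomial.X + Polynomial.C 101587394585600, ?_, ?_⟩
    · monicity!
    · simp only [Polynomial.eval₂_add, Polynomial.eval₂_mul, Polynomial.eval₂_pow,
        Polynomial.eval₂_X, Polynomial.eval₂_C, eq_intCast]
      norm_num
      linear_combination h
  obtain ⟨z, hz⟩ := IsIntegrallyClosed.isIntegral_iff.mp hint
  have hz' : (z : ℚ) = u := hz
  have hzz : z^3 + z^2 - 2236185280*z + 101587394585600 = 0 := by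
    have : (z:ℚ)^3 + (z:ℚ)^2 - 2236185280*(z:ℚ) + 101587394585600 = 0 := by
      rw [hz']; exact h
    exact_mod_cast this
  have h17 : ((z : ZMod 17)^3 + (z : ZMod 17)^2 - 2236185280*(z : ZMod 17)
      + 101587394585600 : ZMod 17) = 0 := by
    have := congrArg (fun t : ℤ => (t : ZMod 17)) hzz
    push_cast at this
    exact this
  have : ∀ t : ZMod 17, t^3 + t^2 - 2236185280*t + 101587394585600 ≠ 0 := by decide
  exact this _ h17

open WeierstrassCurve.Affine in
theorem add_eq_s8 {x₁ y₁ x₂ y₂ x₃ y₃ : ℚ} (h₁ : E14.Nonsingular x₁ y₁)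
    (h₂ : E14.Nonsingular x₂ y₂) (h₃ : E14.Nonsingular x₃ y₃) (hx : x₁ ≠ x₂)
    (e1 : E14.addX x₁ x₂ (E14.slope x₁ x₂ y₁ y₂) = x₃)
    (e2 : E14.addY x₁ x₂ y₁ (E14.slope x₁ x₂ y₁ y₂) = y₃) :
    Point.some _ _ h₁ + Point.some _ _ h₂ = Point.some _ _ h₃ := by
  rw [Point.add_of_X_ne hx]
  subst e1; subst e2; rfl

open WeierstrassCurve.Affine in
theorem dbl_eq {x₁ y₁ x₃ y₃ : ℚ} (h₁ : E14.Nonsingular x₁ y₁)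
    (h₃ : E14.Nonsingular x₃ y₃) (hy : y₁ ≠ E14.negY x₁ y₁)
    (e1 : E14.addX x₁ x₁ (E14.slope x₁ x₁ y₁ y₁) = x₃)
    (e2 : E14.addY x₁ x₁ y₁ (E14.slope x₁ x₁ y₁ y₁) = y₃) :
    Point.some _ _ h₁ + Point.some _ _ h₁ = Point.some _ _ h₃ := by
  rw [Point.add_self_of_Y_ne hy]
  subst e1; subst e2; rfl

theorem hN1 : E14.Nonsingular (11480 : ℚ) (1217300 : ℚ) := by
  rw [WeierstrassCurve.Affine.nonsingular_iff, WeierstrassCurve.Affine.equation_iff]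
  norm_num [E14, WeierstrassCurve.Affine.negY]

theorem hN2 : E14.Nonsingular ((-12040) : ℚ) (1240820 : ℚ) := by
  rw [WeierstrassCurve.Affine.nonsingular_iff, WeierstrassCurve.Affine.equation_iff]
  norm_num [E14, WeierstrassCurve.Affine.negY]

theorem hN3 : E14.Nonsingular (560 : ℚ) ((-1228780) : ℚ) := by
  rw [WeierstrassCurve.Affine.nonsingular_iff, WeierstrassCurve.Affine.equation_iff]
  norm_num [E14, WeierstrassCurve.Affine.negY]

theorem hN4 : E14.Nonsingular (38360 : ℚ) ((-7276780) : ℚ) := by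
  rw [WeierstrassCurve.Affine.nonsingular_iff, WeierstrassCurve.Affine.equation_iff]
  norm_num [E14, WeierstrassCurve.Affine.negY]

theorem hN5 : E14.Nonsingular (49700 : ℚ) (10810520 : ℚ) := by
  rw [WeierstrassCurve.Affine.nonsingular_iff, WeierstrassCurve.Affine.equation_iff]
  norm_num [E14, WeierstrassCurve.Affine.negY]

theorem hN6 : E14.Nonsingular (2072 : ℚ) (1142036 : ℚ) := by
  rw [WeierstrassCurve.Affine.nonsingular_iff, WeierstrassCurve.Affine.equation_iff]
  norm_num [E14, WeierstrassCurve.Affine.negY]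

theorem hN7 : E14.Nonsingular ((-13480) : ℚ) ((-1004140) : ℚ) := by
  rw [WeierstrassCurve.Affine.nonsingular_iff, WeierstrassCurve.Affine.equation_iff]
  norm_num [E14, WeierstrassCurve.Affine.negY]

theorem hN8 : E14.Nonsingular (10010 : ℚ) ((-1096480) : ℚ) := by
  rw [WeierstrassCurve.Affine.nonsingular_iff, WeierstrassCurve.Affine.equation_iff]
  norm_num [E14, WeierstrassCurve.Affine.negY]

theorem hN9 : E14.Nonsingular (2457560 : ℚ) ((-3853804780) : ℚ) := by
  rw [WeierstrassCurve.Affine.nonsingular_iff, WeierstrassCurve.Affine.equation_iff]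
  norm_num [E14, WeierstrassCurve.Affine.negY]

theorem hN10 : E14.Nonsingular (13160 : ℚ) (1417220 : ℚ) := by
  rw [WeierstrassCurve.Affine.nonsingular_iff, WeierstrassCurve.Affine.equation_iff]
  norm_num [E14, WeierstrassCurve.Affine.negY]

theorem hN11 : E14.Nonsingular ((-10360) : ℚ) (1392020 : ℚ) := by
  rw [WeierstrassCurve.Affine.nonsingular_iff, WeierstrassCurve.Affine.equation_iff]
  norm_num [E14, WeierstrassCurve.Affine.negY]

theorem hN12 : E14.Nonsingular ((-1064) : ℚ) ((-1316588) : ℚ) := by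
  rw [WeierstrassCurve.Affine.nonsingular_iff, WeierstrassCurve.Affine.equation_iff]
  norm_num [E14, WeierstrassCurve.Affine.negY]

theorem hN13 : E14.Nonsingular (30590 : ℚ) ((-5108110) : ℚ) := by
  rw [WeierstrassCurve.Affine.nonsingular_iff, WeierstrassCurve.Affine.equation_iff]
  norm_num [E14, WeierstrassCurve.Affine.negY]

theorem hN14 : E14.Nonsingular (67160 : ℚ) (17145620 : ℚ) := by
  rw [WeierstrassCurve.Affine.nonsingular_iff, WeierstrassCurve.Affine.equation_iff]
  norm_num [E14, WeierstrassCurve.Affine.negY]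

theorem hyP : (1217300 : ℚ) ≠ E14.negY 11480 1217300 := by
  norm_num [E14, WeierstrassCurve.Affine.negY]

open WeierstrassCurve.Affine in
theorem s2 : Point.some _ _ hN1 + Point.some _ _ hN1 = Point.some _ _ hN2 := by
  apply dbl_eq _ _ hyP
  · rw [WeierstrassCurve.Affine.slope_of_Y_ne rfl hyP]
    norm_num [E14, WeierstrassCurve.Affine.negY]
  · rw [WeierstrassCurve.Affine.slope_of_Y_ne rfl hyP]
    norm_num [E14, WeierstrassCurve.Affine.negY, WeierstrassCurve.Affine.addY, WeierstrassCurve.Affine.negAddY, WeierstrassCurve.Affine.addX]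

open WeierstrassCurve.Affine in
theorem s3 : Point.some _ _ hN2 + Point.some _ _ hN1 = Point.some _ _ hN3 := by
  apply add_eq_s8 _ _ _ (by norm_num)
  · rw [WeierstrassCurve.Affine.slope_of_X_ne (by norm_num)]
    norm_num [E14, WeierstrassCurve.Affine.negY]
  · rw [WeierstrassCurve.Affine.slope_of_X_ne (by norm_num)]
    norm_num [E14, WeierstrassCurve.Affine.negY, WeierstrassCurve.Affine.addY, WeierstrassCurve.Affine.negAddY, WeierstrassCurve.Affine.addX]

open WeierstrassCurve.Affine in
theorem s4 : Point.some _ _ hN3 + Point.some _ _ hN1 = Point.some _ _ hN4 := by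
  apply add_eq_s8 _ _ _ (by norm_num)
  · rw [WeierstrassCurve.Affine.slope_of_X_ne (by norm_num)]
    norm_num [E14, WeierstrassCurve.Affine.negY]
  · rw [WeierstrassCurve.Affine.slope_of_X_ne (by norm_num)]
    norm_num [E14, WeierstrassCurve.Affine.negY, WeierstrassCurve.Affine.addY, WeierstrassCurve.Affine.negAddY, WeierstrassCurve.Affine.addX]

open WeierstrassCurve.Affine in
theorem s5 : Point.some _ _ hN4 + Point.some _ _ hN1 = Point.some _ _ hN5 := by
  apply add_eq_s8 _ _ _ (by norm_num)
  · rw [WeierstrassCurve.Affine.slope_of_X_ne (by norm_num)]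
    norm_num [E14, WeierstrassCurve.Affine.negY]
  · rw [WeierstrassCurve.Affine.slope_of_X_ne (by norm_num)]
    norm_num [E14, WeierstrassCurve.Affine.negY, WeierstrassCurve.Affine.addY, WeierstrassCurve.Affine.negAddY, WeierstrassCurve.Affine.addX]

open WeierstrassCurve.Affine in
theorem s6 : Point.some _ _ hN5 + Point.some _ _ hN1 = Point.some _ _ hN6 := by
  apply add_eq_s8 _ _ _ (by norm_num)
  · rw [WeierstrassCurve.Affine.slope_of_X_ne (by norm_num)]
    norm_num [E14, WeierstrassCurve.Affine.negY]
  · rw [WeierstrassCurve.Affine.slope_of_X_ne (by norm_num)]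
    norm_num [E14, WeierstrassCurve.Affine.negY, WeierstrassCurve.Affine.addY, WeierstrassCurve.Affine.negAddY, WeierstrassCurve.Affine.addX]

open WeierstrassCurve.Affine in
theorem s7 : Point.some _ _ hN6 + Point.some _ _ hN1 = Point.some _ _ hN7 := by
  apply add_eq_s8 _ _ _ (by norm_num)
  · rw [WeierstrassCurve.Affine.slope_of_X_ne (by norm_num)]
    norm_num [E14, WeierstrassCurve.Affine.negY]
  · rw [WeierstrassCurve.Affine.slope_of_X_ne (by norm_num)]
    norm_num [E14, WeierstrassCurve.Affine.negY, WeierstrassCurve.Affine.addY, WeierstrassCurve.Affine.negAddY, WeierstrassCurve.Affine.addX]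

open WeierstrassCurve.Affine in
theorem s8 : Point.some _ _ hN7 + Point.some _ _ hN1 = Point.some _ _ hN8 := by
  apply add_eq_s8 _ _ _ (by norm_num)
  · rw [WeierstrassCurve.Affine.slope_of_X_ne (by norm_num)]
    norm_num [E14, WeierstrassCurve.Affine.negY]
  · rw [WeierstrassCurve.Affine.slope_of_X_ne (by norm_num)]
    norm_num [E14, WeierstrassCurve.Affine.negY, WeierstrassCurve.Affine.addY, WeierstrassCurve.Affine.negAddY, WeierstrassCurve.Affine.addX]

open WeierstrassCurve.Affine in
theorem s9 : Point.some _ _ hN8 + Point.some _ _ hN1 = Point.some _ _ hN9 := by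
  apply add_eq_s8 _ _ _ (by norm_num)
  · rw [WeierstrassCurve.Affine.slope_of_X_ne (by norm_num)]
    norm_num [E14, WeierstrassCurve.Affine.negY]
  · rw [WeierstrassCurve.Affine.slope_of_X_ne (by norm_num)]
    norm_num [E14, WeierstrassCurve.Affine.negY, WeierstrassCurve.Affine.addY, WeierstrassCurve.Affine.negAddY, WeierstrassCurve.Affine.addX]

open WeierstrassCurve.Affine in
theorem s10 : Point.some _ _ hN9 + Point.some _ _ hN1 = Point.some _ _ hN10 := by
  apply add_eq_s8 _ _ _ (by norm_num)
  · rw [WeierstrassCurve.Affine.slope_of_X_ne (by norm_num)]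
    norm_num [E14, WeierstrassCurve.Affine.negY]
  · rw [WeierstrassCurve.Affine.slope_of_X_ne (by norm_num)]
    norm_num [E14, WeierstrassCurve.Affine.negY, WeierstrassCurve.Affine.addY, WeierstrassCurve.Affine.negAddY, WeierstrassCurve.Affine.addX]

open WeierstrassCurve.Affine in
theorem s11 : Point.some _ _ hN10 + Point.some _ _ hN1 = Point.some _ _ hN11 := by
  apply add_eq_s8 _ _ _ (by norm_num)
  · rw [WeierstrassCurve.Affine.slope_of_X_ne (by norm_num)]
    norm_num [E14, WeierstrassCurve.Affine.negY]
  · rw [WeierstrassCurve.Affine.slope_of_X_ne (by norm_num)]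
    norm_num [E14, WeierstrassCurve.Affine.negY, WeierstrassCurve.Affine.addY, WeierstrassCurve.Affine.negAddY, WeierstrassCurve.Affine.addX]

open WeierstrassCurve.Affine in
theorem s12 : Point.some _ _ hN11 + Point.some _ _ hN1 = Point.some _ _ hN12 := by
  apply add_eq_s8 _ _ _ (by norm_num)
  · rw [WeierstrassCurve.Affine.slope_of_X_ne (by norm_num)]
    norm_num [E14, WeierstrassCurve.Affine.negY]
  · rw [WeierstrassCurve.Affine.slope_of_X_ne (by norm_num)]
    norm_num [E14, WeierstrassCurve.Affine.negY, WeierstrassCurve.Affine.addY, WeierstrassCurve.Affine.negAddY, WeierstrassCurve.Affine.addX]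

open WeierstrassCurve.Affine in
theorem s13 : Point.some _ _ hN12 + Point.some _ _ hN1 = Point.some _ _ hN13 := by
  apply add_eq_s8 _ _ _ (by norm_num)
  · rw [WeierstrassCurve.Affine.slope_of_X_ne (by norm_num)]
    norm_num [E14, WeierstrassCurve.Affine.negY]
  · rw [WeierstrassCurve.Affine.slope_of_X_ne (by norm_num)]
    norm_num [E14, WeierstrassCurve.Affine.negY, WeierstrassCurve.Affine.addY, WeierstrassCurve.Affine.negAddY, WeierstrassCurve.Affine.addX]

open WeierstrassCurve.Affine in
theorem s14 : Point.some _ _ hN13 + Point.some _ _ hN1 = Point.some _ _ hN14 := by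
  apply add_eq_s8 _ _ _ (by norm_num)
  · rw [WeierstrassCurve.Affine.slope_of_X_ne (by norm_num)]
    norm_num [E14, WeierstrassCurve.Affine.negY]
  · rw [WeierstrassCurve.Affine.slope_of_X_ne (by norm_num)]
    norm_num [E14, WeierstrassCurve.Affine.negY, WeierstrassCurve.Affine.addY, WeierstrassCurve.Affine.negAddY, WeierstrassCurve.Affine.addX]

open WeierstrassCurve.Affine in
theorem no_two_torsion {x y : ℚ} (h : E14.Nonsingular x y) :
    Point.some _ _ h + Point.some _ _ h ≠ 0 := by
  intro h0
  have hy : y = E14.negY x y := by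
    by_contra hy
    rw [Point.add_self_of_Y_ne hy] at h0
    exact Point.some_ne_zero _ h0
  have heq := (E14.equation_iff x y).mp h.1
  simp only [E14] at heq
  have hy' : 2*y + x = 0 := by
    simp only [negY, E14] at hy
    linear_combination hy
  apply no_rat_root_cubic (4*x)
  linear_combination (-64)*heq + (32*y+16*x)*hy'

open WeierstrassCurve.Affine in
theorem no_half (Q : E14.Point) : Q + Q ≠ Point.some _ _ hN1 := by
  rcases Q with _ | @⟨x, y, h⟩
  · rw [← Point.zero_def, add_zero]
    exact (Point.some_ne_zero hN1).symm
  · by_cases hy : y = E14.negY x y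
    · rw [Point.add_self_of_Y_eq hy]
      exact (Point.some_ne_zero hN1).symm
    · rw [Point.add_self_of_Y_ne hy]
      intro hQ
      rw [Point.some.injEq] at hQ
      obtain ⟨hx, -⟩ := hQ
      rw [slope_of_Y_ne rfl hy] at hx
      have hD : y - E14.negY x y ≠ 0 := sub_ne_zero.mpr hy
      simp only [negY, addX, E14] at hx hD
      have hD' : 2*y + x ≠ 0 := by
        intro hc; apply hD; linear_combination hc
      have heq := (E14.equation_iff x y).mp h.1
      simp only [E14] at heq
      rw [show y - (-y - 1 * x - 0) = 2*y+x from by ring] at hx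
      field_simp [hD'] at hx
      have h3 : ((3*x^2 - 139761580 - y)^2 + (3*x^2 - 139761580 - y)*(2*y+x)
          - (2*x+11480)*(2*y+x)^2) * (2*y+x) = 0 := by linear_combination (2*y+x)*hx
      have h2 := (mul_eq_zero.mp h3).resolve_right hD'
      apply no_rat_root_quartic x
      linear_combination h2 + (8*x+45921)*heq

theorem stmt_8 :
    ∃ h : E14.Nonsingular 11480 1217300,
      (∀ k : ℕ, 0 < k →
        k • (WeierstrassCurve.Affine.Point.some _ _ h) ≠ (0 : E14.Point)) ∧
      (∀ m : ℕ, 1 ≤ m → m ≤ 14 →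
        ∃ (x y : ℚ) (h' : E14.Nonsingular x y) (a b : ℤ),
          m • (WeierstrassCurve.Affine.Point.some _ _ h)
            = WeierstrassCurve.Affine.Point.some _ _ h' ∧
          x = (a : ℚ) ∧ y = (b : ℚ)) := by
  have e1 : (1:ℕ) • (WeierstrassCurve.Affine.Point.some _ _ hN1 : E14.Point)
      = WeierstrassCurve.Affine.Point.some _ _ hN1 := one_nsmul _

  have e2 : (2:ℕ) • (WeierstrassCurve.Affine.Point.some _ _ hN1 : E14.Point)
      = WeierstrassCurve.Affine.Point.some _ _ hN2 := by
    rw [show (2:ℕ) = 1+1 from rfl, succ_nsmul, e1]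
    exact s2

  have e3 : (3:ℕ) • (WeierstrassCurve.Affine.Point.some _ _ hN1 : E14.Point)
      = WeierstrassCurve.Affine.Point.some _ _ hN3 := by
    rw [show (3:ℕ) = 2+1 from rfl, succ_nsmul, e2]
    exact s3

  have e4 : (4:ℕ) • (WeierstrassCurve.Affine.Point.some _ _ hN1 : E14.Point)
      = WeierstrassCurve.Affine.Point.some _ _ hN4 := by
    rw [show (4:ℕ) = 3+1 from rfl, succ_nsmul, e3]
    exact s4

  have e5 : (5:ℕ) • (WeierstrassCurve.Affine.Point.some _ _ hN1 : E14.Point)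
      = WeierstrassCurve.Affine.Point.some _ _ hN5 := by
    rw [show (5:ℕ) = 4+1 from rfl, succ_nsmul, e4]
    exact s5

  have e6 : (6:ℕ) • (WeierstrassCurve.Affine.Point.some _ _ hN1 : E14.Point)
      = WeierstrassCurve.Affine.Point.some _ _ hN6 := by
    rw [show (6:ℕ) = 5+1 from rfl, succ_nsmul, e5]
    exact s6

  have e7 : (7:ℕ) • (WeierstrassCurve.Affine.Point.some _ _ hN1 : E14.Point)
      = WeierstrassCurve.Affine.Point.some _ _ hN7 := by
    rw [show (7:ℕ) = 6+1 from rfl, succ_nsmul, e6]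
    exact s7

  have e8 : (8:ℕ) • (WeierstrassCurve.Affine.Point.some _ _ hN1 : E14.Point)
      = WeierstrassCurve.Affine.Point.some _ _ hN8 := by
    rw [show (8:ℕ) = 7+1 from rfl, succ_nsmul, e7]
    exact s8

  have e9 : (9:ℕ) • (WeierstrassCurve.Affine.Point.some _ _ hN1 : E14.Point)
      = WeierstrassCurve.Affine.Point.some _ _ hN9 := by
    rw [show (9:ℕ) = 8+1 from rfl, succ_nsmul, e8]
    exact s9

  have e10 : (10:ℕ) • (WeierstrassCurve.Affine.Point.some _ _ hN1 : E14.Point)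
      = WeierstrassCurve.Affine.Point.some _ _ hN10 := by
    rw [show (10:ℕ) = 9+1 from rfl, succ_nsmul, e9]
    exact s10

  have e11 : (11:ℕ) • (WeierstrassCurve.Affine.Point.some _ _ hN1 : E14.Point)
      = WeierstrassCurve.Affine.Point.some _ _ hN11 := by
    rw [show (11:ℕ) = 10+1 from rfl, succ_nsmul, e10]
    exact s11

  have e12 : (12:ℕ) • (WeierstrassCurve.Affine.Point.some _ _ hN1 : E14.Point)
      = WeierstrassCurve.Affine.Point.some _ _ hN12 := by
    rw [show (12:ℕ) = 11+1 from rfl, succ_nsmul, e11]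
    exact s12

  have e13 : (13:ℕ) • (WeierstrassCurve.Affine.Point.some _ _ hN1 : E14.Point)
      = WeierstrassCurve.Affine.Point.some _ _ hN13 := by
    rw [show (13:ℕ) = 12+1 from rfl, succ_nsmul, e12]
    exact s13

  have e14 : (14:ℕ) • (WeierstrassCurve.Affine.Point.some _ _ hN1 : E14.Point)
      = WeierstrassCurve.Affine.Point.some _ _ hN14 := by
    rw [show (14:ℕ) = 13+1 from rfl, succ_nsmul, e13]
    exact s14

  refine ⟨hN1, ?_, ?_⟩
  · intro k hk hk0
    have hfin : IsOfFinAddOrder (WeierstrassCurve.Affine.Point.some _ _ hN1 : E14.Point) :=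
      isOfFinAddOrder_iff_nsmul_eq_zero.mpr ⟨k, hk, hk0⟩
    set n := addOrderOf (WeierstrassCurve.Affine.Point.some _ _ hN1 : E14.Point) with hn
    have hn0 : 0 < n := hfin.addOrderOf_pos
    have hnP : n • (WeierstrassCurve.Affine.Point.some _ _ hN1 : E14.Point) = 0 :=
      addOrderOf_nsmul_eq_zero _
    rcases Nat.even_or_odd n with ⟨m, hm⟩ | ⟨m, hm⟩
    · have hm0 : 0 < m := by omega
      have hQ0 : m • (WeierstrassCurve.Affine.Point.some _ _ hN1 : E14.Point) ≠ 0 := by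
        intro h0
        have hdvd := addOrderOf_dvd_of_nsmul_eq_zero h0
        rw [← hn] at hdvd
        have := Nat.le_of_dvd hm0 hdvd
        omega
      have hQQ : m • (WeierstrassCurve.Affine.Point.some _ _ hN1 : E14.Point)
          + m • (WeierstrassCurve.Affine.Point.some _ _ hN1 : E14.Point) = 0 := by
        rw [← add_nsmul, ← hm, hnP]
      rcases hQm : m • (WeierstrassCurve.Affine.Point.some _ _ hN1 : E14.Point) with _ | @⟨x,y,hns⟩
      · exact hQ0 (hQm.trans WeierstrassCurve.Affine.Point.zero_def)
      · rw [hQm] at hQQ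
        exact no_two_torsion hns hQQ
    · have hP' : (m+1) • (WeierstrassCurve.Affine.Point.some _ _ hN1 : E14.Point)
          + (m+1) • (WeierstrassCurve.Affine.Point.some _ _ hN1 : E14.Point)
          = WeierstrassCurve.Affine.Point.some _ _ hN1 := by
        rw [← add_nsmul, show m+1+(m+1) = n+1 by omega, succ_nsmul, hnP, zero_add]
      exact no_half _ hP'
  · intro m hm1 hm14
    interval_cases m
    · exact ⟨_, _, hN1, 11480, 1217300, e1, by norm_num, by norm_num⟩
    · exact ⟨_, _, hN2, -12040, 1240820, e2, by norm_num, by norm_num⟩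
    · exact ⟨_, _, hN3, 560, -1228780, e3, by norm_num, by norm_num⟩
    · exact ⟨_, _, hN4, 38360, -7276780, e4, by norm_num, by norm_num⟩
    · exact ⟨_, _, hN5, 49700, 10810520, e5, by norm_num, by norm_num⟩
    · exact ⟨_, _, hN6, 2072, 1142036, e6, by norm_num, by norm_num⟩
    · exact ⟨_, _, hN7, -13480, -1004140, e7, by norm_num, by norm_num⟩
    · exact ⟨_, _, hN8, 10010, -1096480, e8, by norm_num, by norm_num⟩
    · exact ⟨_, _, hN9, 2457560, -3853804780, e9, by norm_num, by norm_num⟩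
    · exact ⟨_, _, hN10, 13160, 1417220, e10, by norm_num, by norm_num⟩
    · exact ⟨_, _, hN11, -10360, 1392020, e11, by norm_num, by norm_num⟩
    · exact ⟨_, _, hN12, -1064, -1316588, e12, by norm_num, by norm_num⟩
    · exact ⟨_, _, hN13, 30590, -5108110, e13, by norm_num, by norm_num⟩
    · exact ⟨_, _, hN14, 67160, 17145620, e14, by norm_num, by norm_num⟩
end

section
/- If (S, H) is admissible and d(S) = 12, then H ≥ 1/30; moreover H = 1/30 holds if and only if h_m(S,H) = 0 for every m with 1 ≤ m ≤ 6. -/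
/-- The periodized second Bernoulli polynomial `B(x) = {x}² − {x} + 1/6`. -/
def bernB (x : ℚ) : ℚ := Int.fract x ^ 2 - Int.fract x + 1 / 6

/-- `d(S) = Σ_{z ∈ S} den(z)`: the sum of the denominators (in lowest terms)
of the elements of the multiset `S`. -/
def dS (S : Multiset ℚ) : ℕ := (S.map fun z => z.den).sum

/-- `λ_m(S) = Σ_{z ∈ S} den(z)·B(m·z)`. -/
def lamS (m : ℕ) (S : Multiset ℚ) : ℚ :=
  (S.map fun z => (z.den : ℚ) * bernB (m * z)).sum

/-- `h_m(S,H) = m²·H − λ_m(S)`. -/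
def hS (m : ℕ) (S : Multiset ℚ) (H : ℚ) : ℚ := (m : ℚ) ^ 2 * H - lamS m S

/-- `(S, H)` is admissible: `S` is a multiset of rationals in `[0, 1/2]`, `H > 0`,
each `h_m(S,H)` is a nonnegative even integer, and `h_{m′}(S,H) ≤ h_m(S,H)`
whenever `m′ ∣ m`. -/
def Admissible (S : Multiset ℚ) (H : ℚ) : Prop :=
  (∀ z ∈ S, 0 ≤ z ∧ z ≤ 1 / 2) ∧ 0 < H ∧
  (∀ m : ℕ, 0 < m → ∃ k : ℕ, hS m S H = 2 * k) ∧
  (∀ m m' : ℕ, 0 < m' → 0 < m → m' ∣ m → hS m' S H ≤ hS m S H)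

/-- The Möbius condition: `Σ_{m′ ∣ m} μ(m/m′)·h_{m′}(S,H) ≥ 0` for all `m ≥ 1`. -/
def MoebiusCond (S : Multiset ℚ) (H : ℚ) : Prop :=
  ∀ m : ℕ, 0 < m →
    0 ≤ ∑ m' ∈ m.divisors, (ArithmeticFunction.moebius (m / m') : ℚ) * hS m' S H


namespace Stmt13Aux

abbrev V6 : Type := ℤ × ℤ × ℤ × ℤ × ℤ × ℤ

def Zs : List ℚ := [0, 1/12, 1/11, 1/10, 1/9, 1/8, 1/7, 1/6, 2/11, 1/5, 2/9, 1/4, 3/11, 2/7, 3/10, 1/3, 4/11, 3/8, 2/5, 5/12, 3/7, 4/9, 5/11, 1/2]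

def items : List (ℕ × V6) := [
  (1, (4620, 4620, 4620, 4620, 4620, 4620)),
  (12, (30030, 9240, -6930, -18480, -25410, -27720)),
  (11, (25620, 5460, -9660, -19740, -24780, -24780)),
  (10, (21252, 1848, -12012, -20328, -23100, -20328)),
  (9, (16940, -1540, -13860, -20020, -20020, -13860)),
  (8, (12705, -4620, -15015, -18480, -15015, -4620)),
  (7, (8580, -7260, -15180, -15180, -7260, 8580)),
  (6, (4620, -9240, -13860, -9240, 4620, 27720)),
  (11, (5460, -19740, -24780, -9660, 25620, 25620)),
  (5, (924, -10164, -10164, 924, 23100, 924)),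
  (9, (-1540, -20020, -13860, 16940, 16940, -13860)),
  (4, (-2310, -9240, -2310, 18480, -2310, -9240)),
  (11, (-9660, -24780, 5460, 25620, -19740, -19740)),
  (7, (-7260, -15180, 8580, 8580, -15180, -7260)),
  (10, (-12012, -20328, 21252, 1848, -23100, 1848)),
  (3, (-4620, -4620, 13860, -4620, -4620, 13860)),
  (11, (-19740, -9660, 25620, -24780, 5460, 5460)),
  (8, (-15015, -4620, 12705, -18480, 12705, -4620)),
  (5, (-10164, 924, 924, -10164, 23100, -10164)),
  (12, (-25410, 9240, -6930, -18480, 30030, -27720)),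
  (7, (-15180, 8580, -7260, -7260, 8580, -15180)),
  (9, (-20020, 16940, -13860, -1540, -1540, -13860)),
  (11, (-24780, 25620, -19740, 5460, -9660, -9660)),
  (2, (-4620, 9240, -4620, 9240, -4620, 9240))]

def term (m : ℕ) (z : ℚ) : ℚ := (z.den : ℚ) * bernB (m * z)

def vadd (a b : V6) : V6 :=
  (a.1+b.1, a.2.1+b.2.1, a.2.2.1+b.2.2.1, a.2.2.2.1+b.2.2.2.1,
   a.2.2.2.2.1+b.2.2.2.2.1, a.2.2.2.2.2+b.2.2.2.2.2)

def good (v : V6) : Bool :=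
  if (0 < v.1 ∧ 30 * v.1 ≤ 27720 ∧ v.2.1 = 4*v.1 ∧ v.2.2.1 = 9*v.1 ∧
      v.2.2.2.1 = 16*v.1 ∧ v.2.2.2.2.1 = 25*v.1)
  then decide (30 * v.1 = 27720 ∧ v.2.2.2.2.2 = 36 * v.1) else true

def chk : ℕ → ℕ → V6 → Bool
  | _, 0, v => good v
  | 0, _+1, _ => true
  | fuel+1, d+1, v =>
      items.all fun p => if p.1 ≤ d+1 then chk fuel (d+1-p.1) (vadd p.2 v) else true

set_option maxRecDepth 1000000 in
theorem keycheck : chk 12 12 (0,0,0,0,0,0) = true := by decide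

theorem good_spec (v : V6) (h : good v = true)
    (hh : 0 < v.1 ∧ 30 * v.1 ≤ 27720 ∧ v.2.1 = 4*v.1 ∧ v.2.2.1 = 9*v.1 ∧
      v.2.2.2.1 = 16*v.1 ∧ v.2.2.2.2.1 = 25*v.1) :
    30 * v.1 = 27720 ∧ v.2.2.2.2.2 = 36 * v.1 := by
  rw [good, if_pos hh] at h
  exact of_decide_eq_true h

set_option maxHeartbeats 1600000 in
theorem mem_Zs (z : ℚ) (h0 : 0 ≤ z) (h2 : z ≤ 1/2) (hden : z.den ≤ 12) : z ∈ Zs := by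
  have hd0 : (0:ℚ) < (z.den : ℚ) := by exact_mod_cast z.pos
  have hnum : (z.num : ℚ) = z * (z.den : ℚ) := by
    exact (Rat.mul_den_eq_num z).symm
  have h2' : (2 * z.num : ℚ) ≤ ((z.den : ℕ) : ℚ) := by
    rw [hnum]; nlinarith
  have key : 2 * z.num ≤ (z.den : ℤ) := by exact_mod_cast h2'
  have hn0 : 0 ≤ z.num := Rat.num_nonneg.mpr h0
  obtain ⟨n, q, hq1, hq12, hn0', h2n, hzeq⟩ :
      ∃ (n q : ℤ), 1 ≤ q ∧ q ≤ 12 ∧ 0 ≤ n ∧ 2*n ≤ q ∧ z = (n:ℚ)/(q:ℚ) := by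
    refine ⟨z.num, (z.den : ℤ), by exact_mod_cast z.pos, by exact_mod_cast hden,
      hn0, key, ?_⟩
    push_cast [Rat.num_div_den z]
    rfl
  subst hzeq
  have hn6 : n ≤ 6 := by omega
  interval_cases q <;> interval_cases n <;> first | (exfalso; omega) | norm_num [Zs]

set_option maxHeartbeats 1600000 in
theorem zs_item : ∀ z ∈ Zs, ∃ p ∈ items, p.1 = z.den ∧
    ((p.2.1:ℤ):ℚ) = 27720 * term 1 z ∧
    ((p.2.2.1:ℤ):ℚ) = 27720 * term 2 z ∧
    ((p.2.2.2.1:ℤ):ℚ) = 27720 * term 3 z ∧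
    ((p.2.2.2.2.1:ℤ):ℚ) = 27720 * term 4 z ∧
    ((p.2.2.2.2.2.1:ℤ):ℚ) = 27720 * term 5 z ∧
    ((p.2.2.2.2.2.2:ℤ):ℚ) = 27720 * term 6 z := by
  intro z hz
  simp only [Zs] at hz
  fin_cases hz
  · exact ⟨(1, (4620, 4620, 4620, 4620, 4620, 4620)), by norm_num [items], by norm_num, by norm_num [term, bernB, Int.fract], by norm_num [term, bernB, Int.fract], by norm_num [term, bernB, Int.fract], by norm_num [term, bernB, Int.fract], by norm_num [term, bernB, Int.fract], by norm_num [term, bernB, Int.fract]⟩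
  · exact ⟨(12, (30030, 9240, -6930, -18480, -25410, -27720)), by norm_num [items], by norm_num, by norm_num [term, bernB, Int.fract], by norm_num [term, bernB, Int.fract], by norm_num [term, bernB, Int.fract], by norm_num [term, bernB, Int.fract], by norm_num [term, bernB, Int.fract], by norm_num [term, bernB, Int.fract]⟩
  · exact ⟨(11, (25620, 5460, -9660, -19740, -24780, -24780)), by norm_num [items], by norm_num, by norm_num [term, bernB, Int.fract], by norm_num [term, bernB, Int.fract], by norm_num [term, bernB, Int.fract], by norm_num [term, bernB, Int.fract], by norm_num [term, bernB, Int.fract], by norm_num [term, bernB, Int.fract]⟩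
  · exact ⟨(10, (21252, 1848, -12012, -20328, -23100, -20328)), by norm_num [items], by norm_num, by norm_num [term, bernB, Int.fract], by norm_num [term, bernB, Int.fract], by norm_num [term, bernB, Int.fract], by norm_num [term, bernB, Int.fract], by norm_num [term, bernB, Int.fract], by norm_num [term, bernB, Int.fract]⟩
  · exact ⟨(9, (16940, -1540, -13860, -20020, -20020, -13860)), by norm_num [items], by norm_num, by norm_num [term, bernB, Int.fract], by norm_num [term, bernB, Int.fract], by norm_num [term, bernB, Int.fract], by norm_num [term, bernB, Int.fract], by norm_num [term, bernB, Int.fract], by norm_num [term, bernB, Int.fract]⟩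
  · exact ⟨(8, (12705, -4620, -15015, -18480, -15015, -4620)), by norm_num [items], by norm_num, by norm_num [term, bernB, Int.fract], by norm_num [term, bernB, Int.fract], by norm_num [term, bernB, Int.fract], by norm_num [term, bernB, Int.fract], by norm_num [term, bernB, Int.fract], by norm_num [term, bernB, Int.fract]⟩
  · exact ⟨(7, (8580, -7260, -15180, -15180, -7260, 8580)), by norm_num [items], by norm_num, by norm_num [term, bernB, Int.fract], by norm_num [term, bernB, Int.fract], by norm_num [term, bernB, Int.fract], by norm_num [term, bernB, Int.fract], by norm_num [term, bernB, Int.fract], by norm_num [term, bernB, Int.fract]⟩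
  · exact ⟨(6, (4620, -9240, -13860, -9240, 4620, 27720)), by norm_num [items], by norm_num, by norm_num [term, bernB, Int.fract], by norm_num [term, bernB, Int.fract], by norm_num [term, bernB, Int.fract], by norm_num [term, bernB, Int.fract], by norm_num [term, bernB, Int.fract], by norm_num [term, bernB, Int.fract]⟩
  · exact ⟨(11, (5460, -19740, -24780, -9660, 25620, 25620)), by norm_num [items], by norm_num, by norm_num [term, bernB, Int.fract], by norm_num [term, bernB, Int.fract], by norm_num [term, bernB, Int.fract], by norm_num [term, bernB, Int.fract], by norm_num [term, bernB, Int.fract], by norm_num [term, bernB, Int.fract]⟩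
  · exact ⟨(5, (924, -10164, -10164, 924, 23100, 924)), by norm_num [items], by norm_num, by norm_num [term, bernB, Int.fract], by norm_num [term, bernB, Int.fract], by norm_num [term, bernB, Int.fract], by norm_num [term, bernB, Int.fract], by norm_num [term, bernB, Int.fract], by norm_num [term, bernB, Int.fract]⟩
  · exact ⟨(9, (-1540, -20020, -13860, 16940, 16940, -13860)), by norm_num [items], by norm_num, by norm_num [term, bernB, Int.fract], by norm_num [term, bernB, Int.fract], by norm_num [term, bernB, Int.fract], by norm_num [term, bernB, Int.fract], by norm_num [term, bernB, Int.fract], by norm_num [term, bernB, Int.fract]⟩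
  · exact ⟨(4, (-2310, -9240, -2310, 18480, -2310, -9240)), by norm_num [items], by norm_num, by norm_num [term, bernB, Int.fract], by norm_num [term, bernB, Int.fract], by norm_num [term, bernB, Int.fract], by norm_num [term, bernB, Int.fract], by norm_num [term, bernB, Int.fract], by norm_num [term, bernB, Int.fract]⟩
  · exact ⟨(11, (-9660, -24780, 5460, 25620, -19740, -19740)), by norm_num [items], by norm_num, by norm_num [term, bernB, Int.fract], by norm_num [term, bernB, Int.fract], by norm_num [term, bernB, Int.fract], by norm_num [term, bernB, Int.fract], by norm_num [term, bernB, Int.fract], by norm_num [term, bernB, Int.fract]⟩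
  · exact ⟨(7, (-7260, -15180, 8580, 8580, -15180, -7260)), by norm_num [items], by norm_num, by norm_num [term, bernB, Int.fract], by norm_num [term, bernB, Int.fract], by norm_num [term, bernB, Int.fract], by norm_num [term, bernB, Int.fract], by norm_num [term, bernB, Int.fract], by norm_num [term, bernB, Int.fract]⟩
  · exact ⟨(10, (-12012, -20328, 21252, 1848, -23100, 1848)), by norm_num [items], by norm_num, by norm_num [term, bernB, Int.fract], by norm_num [term, bernB, Int.fract], by norm_num [term, bernB, Int.fract], by norm_num [term, bernB, Int.fract], by norm_num [term, bernB, Int.fract], by norm_num [term, bernB, Int.fract]⟩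
  · exact ⟨(3, (-4620, -4620, 13860, -4620, -4620, 13860)), by norm_num [items], by norm_num, by norm_num [term, bernB, Int.fract], by norm_num [term, bernB, Int.fract], by norm_num [term, bernB, Int.fract], by norm_num [term, bernB, Int.fract], by norm_num [term, bernB, Int.fract], by norm_num [term, bernB, Int.fract]⟩
  · exact ⟨(11, (-19740, -9660, 25620, -24780, 5460, 5460)), by norm_num [items], by norm_num, by norm_num [term, bernB, Int.fract], by norm_num [term, bernB, Int.fract], by norm_num [term, bernB, Int.fract], by norm_num [term, bernB, Int.fract], by norm_num [term, bernB, Int.fract], by norm_num [term, bernB, Int.fract]⟩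
  · exact ⟨(8, (-15015, -4620, 12705, -18480, 12705, -4620)), by norm_num [items], by norm_num, by norm_num [term, bernB, Int.fract], by norm_num [term, bernB, Int.fract], by norm_num [term, bernB, Int.fract], by norm_num [term, bernB, Int.fract], by norm_num [term, bernB, Int.fract], by norm_num [term, bernB, Int.fract]⟩
  · exact ⟨(5, (-10164, 924, 924, -10164, 23100, -10164)), by norm_num [items], by norm_num, by norm_num [term, bernB, Int.fract], by norm_num [term, bernB, Int.fract], by norm_num [term, bernB, Int.fract], by norm_num [term, bernB, Int.fract], by norm_num [term, bernB, Int.fract], by norm_num [term, bernB, Int.fract]⟩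
  · exact ⟨(12, (-25410, 9240, -6930, -18480, 30030, -27720)), by norm_num [items], by norm_num, by norm_num [term, bernB, Int.fract], by norm_num [term, bernB, Int.fract], by norm_num [term, bernB, Int.fract], by norm_num [term, bernB, Int.fract], by norm_num [term, bernB, Int.fract], by norm_num [term, bernB, Int.fract]⟩
  · exact ⟨(7, (-15180, 8580, -7260, -7260, 8580, -15180)), by norm_num [items], by norm_num, by norm_num [term, bernB, Int.fract], by norm_num [term, bernB, Int.fract], by norm_num [term, bernB, Int.fract], by norm_num [term, bernB, Int.fract], by norm_num [term, bernB, Int.fract], by norm_num [term, bernB, Int.fract]⟩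
  · exact ⟨(9, (-20020, 16940, -13860, -1540, -1540, -13860)), by norm_num [items], by norm_num, by norm_num [term, bernB, Int.fract], by norm_num [term, bernB, Int.fract], by norm_num [term, bernB, Int.fract], by norm_num [term, bernB, Int.fract], by norm_num [term, bernB, Int.fract], by norm_num [term, bernB, Int.fract]⟩
  · exact ⟨(11, (-24780, 25620, -19740, 5460, -9660, -9660)), by norm_num [items], by norm_num, by norm_num [term, bernB, Int.fract], by norm_num [term, bernB, Int.fract], by norm_num [term, bernB, Int.fract], by norm_num [term, bernB, Int.fract], by norm_num [term, bernB, Int.fract], by norm_num [term, bernB, Int.fract]⟩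
  · exact ⟨(2, (-4620, 9240, -4620, 9240, -4620, 9240)), by norm_num [items], by norm_num, by norm_num [term, bernB, Int.fract], by norm_num [term, bernB, Int.fract], by norm_num [term, bernB, Int.fract], by norm_num [term, bernB, Int.fract], by norm_num [term, bernB, Int.fract], by norm_num [term, bernB, Int.fract]⟩

set_option maxHeartbeats 1600000 in
theorem cert : ∀ z ∈ Zs,
    (-5/4) * term 1 z + (-3/4) * term 2 z + (1/4) * term 3 z
      + term 4 z + term 5 z + term 6 z ≤ 5/24 * (z.den : ℚ) := by
  intro z hz
  simp only [Zs] at hz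
  fin_cases hz <;> norm_num [term, bernB, Int.fract]

theorem bernB_lb (x : ℚ) : -(1/12) ≤ bernB x := by
  have := sq_nonneg (Int.fract x - 1/2)
  unfold bernB; nlinarith

theorem lamS_cons (m : ℕ) (z : ℚ) (T : Multiset ℚ) :
    lamS m (z ::ₘ T) = term m z + lamS m T := by
  simp [lamS, term]

theorem dS_cons (z : ℚ) (T : Multiset ℚ) : dS (z ::ₘ T) = z.den + dS T := by
  simp [dS]

theorem den_le_dS (S : Multiset ℚ) (z : ℚ) (hz : z ∈ S) : z.den ≤ dS S :=
  Multiset.single_le_sum (fun _ _ => Nat.zero_le _) _ (Multiset.mem_map_of_mem _ hz)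

theorem den_sum_cast (S : Multiset ℚ) :
    (S.map fun z => ((z.den : ℕ) : ℚ)).sum = (dS S : ℚ) := by
  induction S using Multiset.induction_on with
  | empty => simp [dS]
  | cons a s ih =>
    rw [Multiset.map_cons, Multiset.sum_cons, ih, dS_cons]
    push_cast
    ring

theorem lamS_lb (m : ℕ) (S : Multiset ℚ) (hd : dS S = 12) : -1 ≤ lamS m S := by
  have hle : ((S.map fun z => -(1/12) * ((z.den:ℕ):ℚ)).sum) ≤ lamS m S := by
    refine Multiset.sum_map_le_sum_map _ _ (fun z _ => ?_)
    have h1 : -(1/12) ≤ bernB (m * z) := bernB_lb _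
    have h2 : (0:ℚ) ≤ (z.den : ℚ) := by positivity
    nlinarith
  rw [Multiset.sum_map_mul_left, den_sum_cast, hd] at hle
  linarith

theorem sound : ∀ (fuel : ℕ) (S : Multiset ℚ) (v : V6),
    (∀ z ∈ S, z ∈ Zs) → dS S ≤ fuel → chk fuel (dS S) v = true →
    ∃ w : V6, good w = true ∧
      (w.1:ℚ) = (v.1:ℚ) + 27720 * lamS 1 S ∧
      (w.2.1:ℚ) = (v.2.1:ℚ) + 27720 * lamS 2 S ∧
      (w.2.2.1:ℚ) = (v.2.2.1:ℚ) + 27720 * lamS 3 S ∧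
      (w.2.2.2.1:ℚ) = (v.2.2.2.1:ℚ) + 27720 * lamS 4 S ∧
      (w.2.2.2.2.1:ℚ) = (v.2.2.2.2.1:ℚ) + 27720 * lamS 5 S ∧
      (w.2.2.2.2.2:ℚ) = (v.2.2.2.2.2:ℚ) + 27720 * lamS 6 S := by
  intro fuel
  induction fuel with
  | zero =>
    intro S v hmem hle hchk
    have hS0 : S = 0 := by
      by_contra h
      obtain ⟨z, hz⟩ := Multiset.exists_mem_of_ne_zero h
      have h1 := den_le_dS S z hz
      have h2 := z.pos
      omega
    subst hS0
    refine ⟨v, ?_, by simp [lamS], by simp [lamS], by simp [lamS], by simp [lamS],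
      by simp [lamS], by simp [lamS]⟩
    simpa [chk, dS] using hchk
  | succ f ih =>
    intro S v hmem hle hchk
    by_cases hS0 : S = 0
    · subst hS0
      refine ⟨v, ?_, by simp [lamS], by simp [lamS], by simp [lamS], by simp [lamS],
        by simp [lamS], by simp [lamS]⟩
      simpa [chk, dS] using hchk
    · obtain ⟨z, hz⟩ := Multiset.exists_mem_of_ne_zero hS0
      obtain ⟨T, rfl⟩ := Multiset.exists_cons_of_mem hz
      obtain ⟨p, hpmem, hpd, hp1, hp2, hp3, hp4, hp5, hp6⟩ :=
        zs_item z (hmem z (Multiset.mem_cons_self z T))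
      have hden1 : 1 ≤ z.den := z.pos
      have hdS : dS (z ::ₘ T) = z.den + dS T := dS_cons z T
      obtain ⟨e, he⟩ : ∃ e, dS (z ::ₘ T) = e + 1 := ⟨dS (z ::ₘ T) - 1, by omega⟩
      rw [he] at hchk
      have hchk' : ∀ p' ∈ items,
          (if p'.1 ≤ e+1 then chk f (e+1-p'.1) (vadd p'.2 v) else true) = true := by
        rw [← List.all_eq_true]; exact hchk
      have h2 := hchk' p hpmem
      rw [if_pos (by omega : p.1 ≤ e+1)] at h2
      have hT : e + 1 - p.1 = dS T := by omega
      rw [hT] at h2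
      obtain ⟨w, hw, c1, c2, c3, c4, c5, c6⟩ :=
        ih T (vadd p.2 v) (fun y hy => hmem y (Multiset.mem_cons_of_mem hy)) (by omega) h2
      simp only [vadd] at c1 c2 c3 c4 c5 c6
      refine ⟨w, hw, ?_, ?_, ?_, ?_, ?_, ?_⟩ <;>
        [(rw [c1]; rw [lamS_cons]; push_cast; linarith [hp1]);
         (rw [c2]; rw [lamS_cons]; push_cast; linarith [hp2]);
         (rw [c3]; rw [lamS_cons]; push_cast; linarith [hp3]);
         (rw [c4]; rw [lamS_cons]; push_cast; linarith [hp4]);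
         (rw [c5]; rw [lamS_cons]; push_cast; linarith [hp5]);
         (rw [c6]; rw [lamS_cons]; push_cast; linarith [hp6])]


theorem comb_sum (S : Multiset ℚ) :
    (S.map (fun z => (-5/4)*term 1 z + (-3/4)*term 2 z + (1/4)*term 3 z
        + term 4 z + term 5 z + term 6 z)).sum
      = (-5/4)*lamS 1 S + (-3/4)*lamS 2 S + (1/4)*lamS 3 S
        + lamS 4 S + lamS 5 S + lamS 6 S := by
  induction S using Multiset.induction_on with
  | empty => simp [lamS]
  | cons a s ih =>
    rw [Multiset.map_cons, Multiset.sum_cons, ih]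
    simp only [lamS_cons]
    ring

end Stmt13Aux

set_option maxHeartbeats 4000000 in
open Stmt13Aux in
theorem stmt_13 (S : Multiset ℚ) (H : ℚ) (hadm : Admissible S H)
    (hd : dS S = 12) :
    1 / 30 ≤ H ∧ (H = 1 / 30 ↔ ∀ m : ℕ, 1 ≤ m → m ≤ 6 → hS m S H = 0) := by
  obtain ⟨hrange, hHpos, heven, hmono⟩ := hadm
  have hmem : ∀ z ∈ S, z ∈ Zs := by
    intro z hz
    refine mem_Zs z (hrange z hz).1 (hrange z hz).2 ?_
    have := den_le_dS S z hz; omega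
  -- h_m = 0 for 1 ≤ m ≤ 5 whenever H ≤ 1/30
  have hzero : H ≤ 1/30 → ∀ m : ℕ, 1 ≤ m → m ≤ 5 → hS m S H = 0 := by
    intro hH m h1 h5
    obtain ⟨k, hk⟩ := heven m (by omega)
    have hlb := lamS_lb m S hd
    have hm5 : ((m:ℚ)) ≤ 5 := by exact_mod_cast h5
    have hm0 : (0:ℚ) ≤ (m:ℚ) := by positivity
    have hub : hS m S H < 2 := by
      unfold hS
      nlinarith
    rw [hk] at hub ⊢
    have : (k:ℚ) < 1 := by linarith
    have : k = 0 := by exact_mod_cast Nat.lt_one_iff.mp (by exact_mod_cast this)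
    simp [this]
  -- main claim from the enumeration
  have claimA : H ≤ 1/30 → H = 1/30 ∧ hS 6 S H = 0 := by
    intro hH
    have hlam : ∀ m : ℕ, 1 ≤ m → m ≤ 5 → lamS m S = (m:ℚ)^2 * H := by
      intro m h1 h5
      have := hzero hH m h1 h5
      unfold hS at this; linarith
    obtain ⟨w, hgood, c1, c2, c3, c4, c5, c6⟩ :=
      sound 12 S (0,0,0,0,0,0) hmem (by rw [hd]) (by rw [hd]; exact keycheck)
    have l1 : lamS 1 S = H := by have := hlam 1 (by norm_num) (by norm_num); push_cast at this; linarith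
    have l2 : lamS 2 S = 4 * H := by have := hlam 2 (by norm_num) (by norm_num); push_cast at this; nlinarith
    have l3 : lamS 3 S = 9 * H := by have := hlam 3 (by norm_num) (by norm_num); push_cast at this; nlinarith
    have l4 : lamS 4 S = 16 * H := by have := hlam 4 (by norm_num) (by norm_num); push_cast at this; nlinarith
    have l5 : lamS 5 S = 25 * H := by have := hlam 5 (by norm_num) (by norm_num); push_cast at this; nlinarith
    simp only [l1, l2, l3, l4, l5] at c1 c2 c3 c4 c5
    norm_num at c1 c2 c3 c4 c5 c6
    have hyp : 0 < w.1 ∧ 30 * w.1 ≤ 27720 ∧ w.2.1 = 4*w.1 ∧ w.2.2.1 = 9*w.1 ∧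
        w.2.2.2.1 = 16*w.1 ∧ w.2.2.2.2.1 = 25*w.1 := by
      refine ⟨?_, ?_, ?_, ?_, ?_, ?_⟩
      · have : (0:ℚ) < (w.1:ℚ) := by rw [c1]; positivity
        exact_mod_cast this
      · have : ((30 * w.1 : ℤ):ℚ) ≤ ((27720:ℤ):ℚ) := by push_cast; rw [c1]; linarith
        exact_mod_cast this
      · have : ((w.2.1 : ℤ):ℚ) = ((4 * w.1 : ℤ):ℚ) := by push_cast; rw [c1, c2]; ring
        exact_mod_cast this
      · have : ((w.2.2.1 : ℤ):ℚ) = ((9 * w.1 : ℤ):ℚ) := by push_cast; rw [c1, c3]; ring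
        exact_mod_cast this
      · have : ((w.2.2.2.1 : ℤ):ℚ) = ((16 * w.1 : ℤ):ℚ) := by push_cast; rw [c1, c4]; ring
        exact_mod_cast this
      · have : ((w.2.2.2.2.1 : ℤ):ℚ) = ((25 * w.1 : ℤ):ℚ) := by push_cast; rw [c1, c5]; ring
        exact_mod_cast this
    obtain ⟨he1, he2⟩ := good_spec w hgood hyp
    have hq1 : ((30 * w.1 : ℤ):ℚ) = ((27720:ℤ):ℚ) := by exact_mod_cast he1
    push_cast at hq1
    rw [c1] at hq1
    have hH30 : H = 1/30 := by linarith
    refine ⟨hH30, ?_⟩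
    have hq2 : ((w.2.2.2.2.2 : ℤ):ℚ) = ((36 * w.1 : ℤ):ℚ) := by exact_mod_cast he2
    push_cast at hq2
    rw [c1, c6] at hq2
    have hl6 : lamS 6 S = 36 * H := by linarith
    unfold hS
    rw [hl6]
    push_cast
    ring
  have part1 : 1/30 ≤ H := by
    by_contra hlt
    push_neg at hlt
    have := (claimA (le_of_lt hlt)).1
    linarith
  refine ⟨part1, ?_, ?_⟩
  · -- H = 1/30 → all h_m = 0 for 1 ≤ m ≤ 6
    intro hH30 m h1 h6
    rcases Nat.lt_or_ge m 6 with h | h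
    · exact hzero (le_of_eq hH30) m h1 (by omega)
    · have hm6 : m = 6 := by omega
      subst hm6
      exact (claimA (le_of_eq hH30)).2
  · -- all h_m = 0 for m ≤ 6 → H = 1/30
    intro hall
    have hlam : ∀ m : ℕ, 1 ≤ m → m ≤ 6 → lamS m S = (m:ℚ)^2 * H := by
      intro m ha hb
      have := hall m ha hb
      unfold hS at this; linarith
    have hcomb : (S.map (fun z => (-5/4)*term 1 z + (-3/4)*term 2 z + (1/4)*term 3 z
        + term 4 z + term 5 z + term 6 z)).sum
        = (-5/4)*lamS 1 S + (-3/4)*lamS 2 S + (1/4)*lamS 3 S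
          + lamS 4 S + lamS 5 S + lamS 6 S := comb_sum S
    have hle : (S.map (fun z => (-5/4)*term 1 z + (-3/4)*term 2 z + (1/4)*term 3 z
        + term 4 z + term 5 z + term 6 z)).sum
        ≤ (S.map fun z => 5/24 * ((z.den:ℕ):ℚ)).sum := by
      refine Multiset.sum_map_le_sum_map _ _ (fun z hz => cert z (hmem z hz))
    rw [hcomb, Multiset.sum_map_mul_left, den_sum_cast, hd] at hle
    have e1 : lamS 1 S = H := by have := hlam 1 (by norm_num) (by norm_num); push_cast at this; linarith
    have e2 : lamS 2 S = 4*H := by have := hlam 2 (by norm_num) (by norm_num); push_cast at this; nlinarith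
    have e3 : lamS 3 S = 9*H := by have := hlam 3 (by norm_num) (by norm_num); push_cast at this; nlinarith
    have e4 : lamS 4 S = 16*H := by have := hlam 4 (by norm_num) (by norm_num); push_cast at this; nlinarith
    have e5 : lamS 5 S = 25*H := by have := hlam 5 (by norm_num) (by norm_num); push_cast at this; nlinarith
    have e6 : lamS 6 S = 36*H := by have := hlam 6 (by norm_num) (by norm_num); push_cast at this; nlinarith
    rw [e1, e2, e3, e4, e5, e6] at hle
    have : 75 * H ≤ 5/2 := by linarith
    linarith
end

section
/- If (S, H) is admissible with d(S) = 24 and h_m(S,H) = 0 for every m with 1 ≤ m ≤ 8, then H = 11/420 and S is the multiset {1/7, 2/5, 1/4, 1/3, 1/2, 0, 0, 0}. -/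
def L : ℕ := 5354228880
def F4 : ℕ := 21416915520

def wfun (m : ℕ) (c : ℕ × ℕ) : ℕ :=
  (L / c.2) * ((m * c.1 % c.2) * (c.2 - m * c.1 % c.2))

abbrev Vec8 := ℕ × ℕ × ℕ × ℕ × ℕ × ℕ × ℕ × ℕ

def vec (c : ℕ × ℕ) : Vec8 :=
  (wfun 1 c, wfun 2 c, wfun 3 c, wfun 4 c, wfun 5 c, wfun 6 c, wfun 7 c, wfun 8 c)

def addv (a b : Vec8) : Vec8 :=
  (a.1 + b.1, a.2.1 + b.2.1, a.2.2.1 + b.2.2.1, a.2.2.2.1 + b.2.2.2.1,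
   a.2.2.2.2.1 + b.2.2.2.2.1, a.2.2.2.2.2.1 + b.2.2.2.2.2.1,
   a.2.2.2.2.2.2.1 + b.2.2.2.2.2.2.1, a.2.2.2.2.2.2.2 + b.2.2.2.2.2.2.2)

def ksm (k : ℕ) (v : Vec8) : Vec8 :=
  (k * v.1, k * v.2.1, k * v.2.2.1, k * v.2.2.2.1, k * v.2.2.2.2.1,
   k * v.2.2.2.2.2.1, k * v.2.2.2.2.2.2.1, k * v.2.2.2.2.2.2.2)

def okB (rem : ℕ) (s : Vec8) : Bool :=
  Nat.blt s.1 F4 && Nat.blt s.2.1 F4 && Nat.blt s.2.2.1 F4 && Nat.blt s.2.2.2.1 F4 &&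
  Nat.blt s.2.2.2.2.1 F4 && Nat.blt s.2.2.2.2.2.1 F4 && Nat.blt s.2.2.2.2.2.2.1 F4 &&
  Nat.blt s.2.2.2.2.2.2.2 F4 &&
  Nat.ble (63 * F4) (64 * s.1 + 16 * L * rem) &&
  Nat.ble (60 * F4) (64 * s.2.1 + 16 * L * rem) &&
  Nat.ble (55 * F4) (64 * s.2.2.1 + 16 * L * rem) &&
  Nat.ble (48 * F4) (64 * s.2.2.2.1 + 16 * L * rem) &&
  Nat.ble (39 * F4) (64 * s.2.2.2.2.1 + 16 * L * rem) &&
  Nat.ble (28 * F4) (64 * s.2.2.2.2.2.1 + 16 * L * rem) &&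
  Nat.ble (15 * F4) (64 * s.2.2.2.2.2.2.1 + 16 * L * rem)

def eqsB (s : Vec8) : Bool :=
  Nat.blt s.1 F4 &&
  Nat.beq (s.2.1 + 4 * F4) (F4 + 4 * s.1) &&
  Nat.beq (s.2.2.1 + 9 * F4) (F4 + 9 * s.1) &&
  Nat.beq (s.2.2.2.1 + 16 * F4) (F4 + 16 * s.1) &&
  Nat.beq (s.2.2.2.2.1 + 25 * F4) (F4 + 25 * s.1) &&
  Nat.beq (s.2.2.2.2.2.1 + 36 * F4) (F4 + 36 * s.1) &&
  Nat.beq (s.2.2.2.2.2.2.1 + 49 * F4) (F4 + 49 * s.1) &&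
  Nat.beq (s.2.2.2.2.2.2.2 + 64 * F4) (F4 + 64 * s.1)

def go : List (ℕ × ℕ) → ℕ → Vec8 → List (List (ℕ × ℕ))
  | [], rem, s => if rem = 0 && eqsB s then [[]] else []
  | c :: cs, rem, s =>
    (List.range (rem / c.2 + 1)).flatMap fun k =>
      let s' := addv s (ksm k (vec c))
      let rem' := rem - k * c.2
      if okB rem' s' then (go cs rem' s').map (List.replicate k c ++ ·)
      else []

def cands : List (ℕ × ℕ) :=
  [(1,24), (5,24), (7,24), (11,24), (1,23), (2,23), (3,23), (4,23), (5,23), (6,23), (7,23), (8,23), (9,23), (10,23), (11,23), (1,22), (3,22), (5,22), (7,22), (9,22), (1,21), (2,21), (4,21), (5,21), (8,21), (10,21), (1,20), (3,20), (7,20), (9,20), (1,19), (2,19), (3,19), (4,19), (5,19), (6,19), (7,19), (8,19), (9,19), (1,18), (5,18), (7,18), (1,17), (2,17), (3,17), (4,17), (5,17), (6,17), (7,17), (8,17), (1,16), (3,16), (5,16), (7,16), (1,15), (2,15), (4,15), (7,15), (1,14), (3,14), (5,14), (1,13), (2,13), (3,13), (4,13), (5,13), (6,13), (1,12), (5,12),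 (1,11), (2,11), (3,11), (4,11), (5,11), (1,10), (3,10), (1,9), (2,9), (4,9), (1,8), (3,8), (1,7), (2,7), (3,7), (1,6), (1,5), (2,5), (1,4), (1,3), (1,2), (0,1)]

def zv : Vec8 := (0,0,0,0,0,0,0,0)

def TtargetL : List (ℕ × ℕ) := [(1,7),(2,5),(1,4),(1,3),(1,2),(0,1),(0,1),(0,1)]

set_option maxRecDepth 100000 in
set_option maxHeartbeats 4000000 in
theorem go_result : go cands 24 zv = [TtargetL] := by decide

def svec (T : Multiset (ℕ × ℕ)) : Vec8 :=
  ((T.map (wfun 1)).sum, (T.map (wfun 2)).sum, (T.map (wfun 3)).sum, (T.map (wfun 4)).sum,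
   (T.map (wfun 5)).sum, (T.map (wfun 6)).sum, (T.map (wfun 7)).sum, (T.map (wfun 8)).sum)

lemma svec_add (A B : Multiset (ℕ × ℕ)) : svec (A + B) = addv (svec A) (svec B) := by
  simp [svec, addv]

lemma svec_replicate (k : ℕ) (c : ℕ × ℕ) : svec (Multiset.replicate k c) = ksm k (vec c) := by
  simp [svec, ksm, vec, Multiset.map_replicate, Multiset.sum_replicate, smul_eq_mul]

lemma addv_assoc (a b c : Vec8) : addv (addv a b) c = addv a (addv b c) := by
  simp [addv, Nat.add_assoc]

lemma wfun_le (m : ℕ) (c : ℕ × ℕ) (hq : 0 < c.2) : 4 * wfun m c ≤ L * c.2 := by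
  obtain ⟨a, q⟩ := c
  simp only [wfun]
  set r := m * a % q with hr
  have hrq : r < q := Nat.mod_lt _ hq
  have h1 : 4 * (r * (q - r)) ≤ q * q := by
    zify [hrq.le]
    nlinarith [sq_nonneg ((q:ℤ) - 2*r)]
  calc 4 * ((L / q) * (r * (q - r))) = (L / q) * (4 * (r * (q - r))) := by ring
    _ ≤ (L / q) * (q * q) := Nat.mul_le_mul_left _ h1
    _ = (L / q * q) * q := by ring
    _ ≤ L * q := Nat.mul_le_mul_right _ (Nat.div_mul_le_self L q)

lemma sum_wfun_le (m : ℕ) (T : Multiset (ℕ × ℕ)) (hq : ∀ x ∈ T, 0 < x.2) :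
    4 * (T.map (wfun m)).sum ≤ L * (T.map Prod.snd).sum := by
  induction T using Multiset.induction with
  | empty => simp
  | cons c T ih =>
    simp only [Multiset.map_cons, Multiset.sum_cons, Nat.mul_add]
    have h1 := wfun_le m c (hq c (Multiset.mem_cons_self c T))
    have h2 := ih (fun x hx => hq x (Multiset.mem_cons_of_mem hx))
    omega

lemma go_complete (cs : List (ℕ × ℕ)) :
    ∀ (rem : ℕ) (s : Vec8) (T : Multiset (ℕ × ℕ)),
    (∀ x ∈ T, x ∈ cs) → (∀ x ∈ cs, 0 < x.2) → (T.map Prod.snd).sum = rem →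
    eqsB (addv s (svec T)) = true → ∃ X ∈ go cs rem s, (X : Multiset (ℕ × ℕ)) = T := by
  induction cs with
  | nil =>
    intro rem s T hmem _ hsum heqs
    have hT : T = 0 := Multiset.eq_zero_of_forall_notMem (fun x hx => by simpa using hmem x hx)
    subst hT
    simp only [Multiset.map_zero, Multiset.sum_zero] at hsum
    subst hsum
    have : addv s (svec 0) = s := by obtain ⟨a,b,c,d,e,f,g,h⟩ := s; simp [svec, addv]
    rw [this] at heqs
    refine ⟨[], ?_, rfl⟩
    simp [go, heqs]
  | cons c cs ih =>
    intro rem s T hmem hpos hsum heqs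
    classical
    set k := T.count c with hk
    set T' := T.filter (fun x => ¬ x = c) with hT'
    have hsplit : Multiset.replicate k c + T' = T := by
      rw [hk, hT', ← Multiset.filter_eq' T c]
      exact Multiset.filter_add_not _ T
    have hqc : 0 < c.2 := hpos c List.mem_cons_self
    have hsum' : k * c.2 + (T'.map Prod.snd).sum = rem := by
      rw [← hsum, ← hsplit]
      simp [Multiset.sum_replicate, smul_eq_mul]
    have hkle : k ≤ rem / c.2 := by
      rw [Nat.le_div_iff_mul_le hqc]; omega
    -- the final vector decomposition
    have hfin : addv s (svec T) = addv (addv s (ksm k (vec c))) (svec T') := by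
      rw [← hsplit, svec_add, svec_replicate, addv_assoc]
    rw [hfin] at heqs
    set s' := addv s (ksm k (vec c)) with hs'
    set rem' := rem - k * c.2 with hrem'
    have hsumT' : (T'.map Prod.snd).sum = rem' := by omega
    -- okB holds for s'
    have hposT' : ∀ x ∈ T', 0 < x.2 := fun x hx =>
      hpos x (hmem x (Multiset.mem_filter.mp hx).1)
    have hok : okB rem' s' = true := by
      have hb1 := sum_wfun_le 1 T' hposT'
      have hb2 := sum_wfun_le 2 T' hposT'
      have hb3 := sum_wfun_le 3 T' hposT'
      have hb4 := sum_wfun_le 4 T' hposT'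
      have hb5 := sum_wfun_le 5 T' hposT'
      have hb6 := sum_wfun_le 6 T' hposT'
      have hb7 := sum_wfun_le 7 T' hposT'
      rw [hsumT'] at hb1 hb2 hb3 hb4 hb5 hb6 hb7
      simp only [eqsB, addv, svec, okB, Bool.and_eq_true, Nat.blt_eq, Nat.beq_eq,
        Nat.ble_eq, L, F4] at heqs hb1 hb2 hb3 hb4 hb5 hb6 hb7 ⊢
      omega
    -- recursive call
    obtain ⟨X', hX'mem, hX'eq⟩ := ih rem' s' T'
      (fun x hx => by
        rcases Multiset.mem_filter.mp hx with ⟨hxT, hne⟩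
        rcases List.mem_cons.mp (hmem x hxT) with h | h
        · exact absurd h hne
        · exact h)
      (fun x hx => hpos x (List.mem_cons_of_mem _ hx))
      hsumT' heqs
    refine ⟨List.replicate k c ++ X', ?_, ?_⟩
    · show _ ∈ go (c :: cs) rem s
      simp only [go]
      rw [List.mem_flatMap]
      refine ⟨k, List.mem_range.mpr (by omega), ?_⟩
      simp only [← hs', ← hrem', hok, if_pos]
      exact List.mem_map.mpr ⟨X', hX'mem, rfl⟩
    · show (↑(List.replicate k c ++ X') : Multiset (ℕ × ℕ)) = T
      rw [← hsplit, ← hX'eq, ← Multiset.coe_replicate, Multiset.coe_add]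

def encode (z : ℚ) : ℕ × ℕ := (z.num.natAbs, z.den)

lemma den_dvd_L {q : ℕ} (h1 : 0 < q) (h2 : q ≤ 24) : q ∣ L := by
  have : ∀ q < 25, q = 0 ∨ q ∣ L := by decide
  rcases this q (by omega) with h | h
  · omega
  · exact h

lemma fract_nat_mul (m : ℕ) (z : ℚ) (hz : 0 ≤ z) :
    Int.fract ((m : ℚ) * z) = ((m * z.num.natAbs % z.den : ℕ) : ℚ) / z.den := by
  have hq0 : (0:ℚ) < z.den := by exact_mod_cast z.pos
  have hnum : ((z.num.natAbs : ℕ) : ℚ) = (z.num : ℚ) := by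
    rw [Nat.cast_natAbs]
    exact congrArg (Int.cast : ℤ → ℚ) (abs_of_nonneg (Rat.num_nonneg.mpr hz))
  have hz' : (m : ℚ) * z = ((m * z.num.natAbs : ℕ) : ℚ) / z.den := by
    conv_lhs => rw [← Rat.num_div_den z]
    push_cast [hnum]
    ring
  set N := m * z.num.natAbs with hN
  have hsplit : ((N : ℕ) : ℚ) / z.den = ((N % z.den : ℕ) : ℚ) / z.den + ((N / z.den : ℕ) : ℚ) := by
    field_simp
    exact_mod_cast (Nat.mod_add_div N z.den).symm
  rw [hz', hsplit, Int.fract_add_natCast, Int.fract_eq_self.mpr]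
  constructor
  · positivity
  · rw [div_lt_one hq0]
    exact_mod_cast Nat.mod_lt _ z.pos

lemma term_eq (m : ℕ) (z : ℚ) (hz : 0 ≤ z) (hdvd : z.den ∣ L) :
    (L : ℚ) * ((z.den : ℚ) * bernB ((m : ℕ) * z)) =
      (L : ℚ) * (z.den : ℚ) / 6 - (wfun m (encode z) : ℚ) := by
  have hq0 : (0:ℚ) < z.den := by exact_mod_cast z.pos
  set q := z.den with hqdef
  set r := m * z.num.natAbs % q with hrdef
  have hrq : r < q := Nat.mod_lt _ z.pos
  have hfr : Int.fract ((m : ℚ) * z) = (r : ℚ) / q := fract_nat_mul m z hz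
  have hLq : ((L / q : ℕ) : ℚ) = (L : ℚ) / q := by
    rw [Nat.cast_div hdvd (by exact_mod_cast hq0.ne' : (q:ℚ) ≠ 0)]
  have hw : (wfun m (encode z) : ℚ) = ((L : ℚ) / q) * ((r : ℚ) * ((q : ℚ) - r)) := by
    simp only [wfun, encode]
    rw [← hqdef, ← hrdef]
    push_cast [hLq, Nat.cast_sub hrq.le]
    ring
  rw [bernB, hfr, hw]
  field_simp
  ring

lemma lam_eq (m : ℕ) (S : Multiset ℚ) (h0 : ∀ z ∈ S, 0 ≤ z) (hdvd : ∀ z ∈ S, z.den ∣ L) :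
    (L : ℚ) * lamS m S + ((S.map (fun z => wfun m (encode z))).sum : ℚ)
      = (L : ℚ) * (dS S : ℚ) / 6 := by
  induction S using Multiset.induction with
  | empty => simp [lamS, dS]
  | cons z S ih =>
    have h1 := term_eq m z (h0 z (Multiset.mem_cons_self z S)) (hdvd z (Multiset.mem_cons_self z S))
    have h2 := ih (fun x hx => h0 x (Multiset.mem_cons_of_mem hx))
      (fun x hx => hdvd x (Multiset.mem_cons_of_mem hx))
    simp only [lamS, dS, Multiset.map_cons, Multiset.sum_cons] at h2 ⊢
    push_cast
    push_cast at h2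
    ring_nf
    ring_nf at h1 h2
    linarith

lemma mem_cands {a q : ℕ} (h0 : 0 < q) (h24 : q ≤ 24) (h2 : 2 * a ≤ q)
    (hg : Nat.gcd a q = 1) : (a, q) ∈ cands := by
  have H : ∀ q < 25, ∀ a < 13,
      q = 0 ∨ ¬(2 * a ≤ q) ∨ ¬(Nat.gcd a q = 1) ∨ (a, q) ∈ cands := by decide
  rcases H q (by omega) a (by omega) with h | h | h | h
  · omega
  · exact absurd h2 h
  · exact absurd hg h
  · exact h

lemma addv_zv (s : Vec8) : addv zv s = s := by
  obtain ⟨a, b, c, d, e, f, g, h⟩ := s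
  simp [addv, zv]

theorem stmt_16 (S : Multiset ℚ) (H : ℚ) (hadm : Admissible S H)
    (hd : dS S = 24) (hzero : ∀ m : ℕ, 1 ≤ m → m ≤ 8 → hS m S H = 0) :
    H = 11 / 420 ∧ S = ({1 / 7, 2 / 5, 1 / 4, 1 / 3, 1 / 2, 0, 0, 0} : Multiset ℚ) := by
  obtain ⟨hrange, hHpos, -, -⟩ := hadm
  set T : Multiset (ℕ × ℕ) := S.map encode with hT
  have h0 : ∀ z ∈ S, 0 ≤ z := fun z hz => (hrange z hz).1
  have hhalf : ∀ z ∈ S, z ≤ 1 / 2 := fun z hz => (hrange z hz).2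
  have hden24 : ∀ z ∈ S, z.den ≤ 24 := by
    intro z hz
    have hmem : z.den ∈ S.map (fun z => z.den) := Multiset.mem_map_of_mem _ hz
    obtain ⟨R, hR⟩ := Multiset.exists_cons_of_mem hmem
    have : dS S = z.den + R.sum := by rw [dS, hR, Multiset.sum_cons]
    omega
  have hdvd : ∀ z ∈ S, z.den ∣ L := fun z hz => den_dvd_L z.pos (hden24 z hz)
  have hL : (L : ℚ) = 5354228880 := by norm_num [L]
  -- the scaled sums
  have hsv : ∀ m : ℕ, ((T.map (wfun m)).sum : ℚ) = 4 * (L : ℚ) - (L : ℚ) * lamS m S := by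
    intro m
    have h1 := lam_eq m S h0 hdvd
    rw [hd] at h1
    have hmm : T.map (wfun m) = S.map (fun z => wfun m (encode z)) := by
      rw [hT, Multiset.map_map]
      rfl
    rw [hmm]
    push_cast at h1 ⊢
    linarith
  have hlam : ∀ m : ℕ, 1 ≤ m → m ≤ 8 → (m : ℚ) ^ 2 * H = lamS m S := by
    intro m h1 h8
    have := hzero m h1 h8
    rw [hS, sub_eq_zero] at this
    exact this
  have key : ∀ m : ℕ, 1 ≤ m → m ≤ 8 →
      ((T.map (wfun m)).sum : ℚ) = 4 * (L : ℚ) - (m : ℚ) ^ 2 * ((L : ℚ) * H) := by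
    intro m h1 h8
    rw [hsv m, ← hlam m h1 h8]
    ring
  have e1 := key 1 (by norm_num) (by norm_num)
  have e2 := key 2 (by norm_num) (by norm_num)
  have e3 := key 3 (by norm_num) (by norm_num)
  have e4 := key 4 (by norm_num) (by norm_num)
  have e5 := key 5 (by norm_num) (by norm_num)
  have e6 := key 6 (by norm_num) (by norm_num)
  have e7 := key 7 (by norm_num) (by norm_num)
  have e8 := key 8 (by norm_num) (by norm_num)
  simp only [Nat.cast_ofNat, Nat.cast_one, one_pow] at e1 e2 e3 e4 e5 e6 e7 e8
  rw [hL] at e1 e2 e3 e4 e5 e6 e7 e8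
  have hXpos : (0 : ℚ) < 5354228880 * H := by positivity
  -- natural-number equations
  have hn1 : (T.map (wfun 1)).sum < 21416915520 := by
    exact_mod_cast (by linarith : ((T.map (wfun 1)).sum : ℚ) < 21416915520)
  have hn2 : (T.map (wfun 2)).sum + 4 * 21416915520 = 21416915520 + 4 * (T.map (wfun 1)).sum := by
    exact_mod_cast (by linarith :
      ((T.map (wfun 2)).sum : ℚ) + 4 * 21416915520 = 21416915520 + 4 * ((T.map (wfun 1)).sum : ℚ))
  have hn3 : (T.map (wfun 3)).sum + 9 * 21416915520 = 21416915520 + 9 * (T.map (wfun 1)).sum := by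
    exact_mod_cast (by linarith :
      ((T.map (wfun 3)).sum : ℚ) + 9 * 21416915520 = 21416915520 + 9 * ((T.map (wfun 1)).sum : ℚ))
  have hn4 : (T.map (wfun 4)).sum + 16 * 21416915520 = 21416915520 + 16 * (T.map (wfun 1)).sum := by
    exact_mod_cast (by linarith :
      ((T.map (wfun 4)).sum : ℚ) + 16 * 21416915520 = 21416915520 + 16 * ((T.map (wfun 1)).sum : ℚ))
  have hn5 : (T.map (wfun 5)).sum + 25 * 21416915520 = 21416915520 + 25 * (T.map (wfun 1)).sum := by
    exact_mod_cast (by linarith :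
      ((T.map (wfun 5)).sum : ℚ) + 25 * 21416915520 = 21416915520 + 25 * ((T.map (wfun 1)).sum : ℚ))
  have hn6 : (T.map (wfun 6)).sum + 36 * 21416915520 = 21416915520 + 36 * (T.map (wfun 1)).sum := by
    exact_mod_cast (by linarith :
      ((T.map (wfun 6)).sum : ℚ) + 36 * 21416915520 = 21416915520 + 36 * ((T.map (wfun 1)).sum : ℚ))
  have hn7 : (T.map (wfun 7)).sum + 49 * 21416915520 = 21416915520 + 49 * (T.map (wfun 1)).sum := by
    exact_mod_cast (by linarith :
      ((T.map (wfun 7)).sum : ℚ) + 49 * 21416915520 = 21416915520 + 49 * ((T.map (wfun 1)).sum : ℚ))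
  have hn8 : (T.map (wfun 8)).sum + 64 * 21416915520 = 21416915520 + 64 * (T.map (wfun 1)).sum := by
    exact_mod_cast (by linarith :
      ((T.map (wfun 8)).sum : ℚ) + 64 * 21416915520 = 21416915520 + 64 * ((T.map (wfun 1)).sum : ℚ))
  have heq : eqsB (addv zv (svec T)) = true := by
    rw [addv_zv]
    simp only [eqsB, svec, Bool.and_eq_true, Nat.blt_eq, Nat.beq_eq, F4]
    omega
  have hsumT : (T.map Prod.snd).sum = 24 := by
    rw [hT, Multiset.map_map]
    exact hd
  have hmemT : ∀ p ∈ T, p ∈ cands := by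
    intro p hp
    obtain ⟨z, hzS, rfl⟩ := Multiset.mem_map.mp hp
    have hq0 : (0 : ℚ) < z.den := by exact_mod_cast z.pos
    have h2a : 2 * z.num.natAbs ≤ z.den := by
      have hzh := hhalf z hzS
      rw [← Rat.num_div_den z, div_le_iff₀ hq0] at hzh
      have h1 : (z.num : ℚ) * 2 ≤ (z.den : ℚ) := by linarith
      have h2 : z.num * 2 ≤ (z.den : ℤ) := by exact_mod_cast h1
      have h3 : (0 : ℤ) ≤ z.num := Rat.num_nonneg.mpr (h0 z hzS)
      omega
    exact mem_cands z.pos (hden24 z hzS) h2a z.reduced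
  obtain ⟨Xl, hXlmem, hXleq⟩ := go_complete cands 24 zv T hmemT (by decide) hsumT heq
  rw [go_result, List.mem_singleton] at hXlmem
  subst hXlmem
  -- now T is known
  have hTt : (↑TtargetL : Multiset (ℕ × ℕ)) = T := hXleq
  have hSdec : S = T.map (fun p : ℕ × ℕ => (p.1 : ℚ) / (p.2 : ℚ)) := by
    rw [hT, Multiset.map_map]
    have hcong : ∀ z ∈ S, ((fun p : ℕ × ℕ => (p.1 : ℚ) / (p.2 : ℚ)) ∘ encode) z = id z := by
      intro z hz
      show ((z.num.natAbs : ℕ) : ℚ) / (z.den : ℚ) = z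
      have hnum : ((z.num.natAbs : ℕ) : ℚ) = (z.num : ℚ) := by
        rw [Nat.cast_natAbs]
        exact congrArg (Int.cast : ℤ → ℚ) (abs_of_nonneg (Rat.num_nonneg.mpr (h0 z hz)))
      rw [hnum, Rat.num_div_den]
    rw [Multiset.map_congr rfl hcong, Multiset.map_id]
  constructor
  · -- H = 11/420
    have hs1 : (Multiset.map (wfun 1) (↑TtargetL : Multiset (ℕ × ℕ))).sum = 21276685716 := by
      decide
    rw [hTt] at hs1
    have hs1' : ((Multiset.map (wfun 1) T).sum : ℚ) = 21276685716 := by exact_mod_cast hs1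
    rw [hs1'] at e1
    linarith
  · rw [hSdec, ← hTt]
    show Multiset.map (fun p : ℕ × ℕ => (p.1 : ℚ) / (p.2 : ℚ)) (↑TtargetL : Multiset (ℕ × ℕ)) = _
    simp only [TtargetL, Multiset.map_coe, List.map_cons, List.map_nil]
    norm_num
    rfl
end
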